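/- arXiv:2105.12956 — 4 statements merged into one kernel-verified Lean document; each statement's English description precedes it below -/
import Mathlib

section
/- For any fixed positive integer r and real X ≥ 2, the sum over natural numbers x ≤ X of τ(x)^r is O(X (log X)^{2^r - 1}), where τ is the number-of-divisors function. -/
open Finset Real

-- submultiplicativity of number of divisors
lemma tau_mul_le (d m : ℕ) (hd : d ≠ 0) (hm : m ≠ 0) :
    (d * m).divisors.card ≤ d.divisors.card * m.divisors.card := by
  rw [← Finset.card_product]
  apply Finset.card_le_card_of_injOn (fun k => (Nat.gcd k d, k / Nat.gcd k d))
  · intro k hk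
    rw [Finset.mem_coe, Nat.mem_divisors] at hk
    obtain ⟨hkdvd, hne⟩ := hk
    have hgpos : 0 < Nat.gcd k d := Nat.gcd_pos_of_pos_right _ (Nat.pos_of_ne_zero hd)
    rw [Finset.mem_coe, Finset.mem_product, Nat.mem_divisors, Nat.mem_divisors]
    refine ⟨⟨Nat.gcd_dvd_right _ _, hd⟩, ?_, hm⟩
    have h1 : k / Nat.gcd k d ∣ (d / Nat.gcd k d) * m := by
      rw [← Nat.mul_dvd_mul_iff_right hgpos]
      rw [Nat.div_mul_cancel (Nat.gcd_dvd_left k d)]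
      calc k ∣ d * m := hkdvd
        _ = d / Nat.gcd k d * m * Nat.gcd k d := by
            rw [mul_right_comm, Nat.div_mul_cancel (Nat.gcd_dvd_right k d)]
    exact (Nat.coprime_div_gcd_div_gcd hgpos).dvd_of_dvd_mul_left h1
  · intro a ha b hb hab
    simp only [Prod.mk.injEq] at hab
    have ha' : Nat.gcd a d ∣ a := Nat.gcd_dvd_left _ _
    have hb' : Nat.gcd b d ∣ b := Nat.gcd_dvd_left _ _
    calc a = Nat.gcd a d * (a / Nat.gcd a d) := (Nat.mul_div_cancel' ha').symm
      _ = Nat.gcd b d * (b / Nat.gcd b d) := by rw [hab.2, hab.1]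
      _ = b := Nat.mul_div_cancel' hb'

-- hyperbola swap
lemma sum_swap_div (N : ℕ) (F : ℕ → ℕ → ℝ) :
    ∑ n ∈ Icc 1 N, ∑ d ∈ n.divisors, F d (n / d)
      = ∑ d ∈ Icc 1 N, ∑ m ∈ Icc 1 (N / d), F d m := by
  rw [Finset.sum_sigma', Finset.sum_sigma']
  apply Finset.sum_nbij' (fun p => (⟨p.2, p.1 / p.2⟩ : Σ _ : ℕ, ℕ))
    (fun p => (⟨p.1 * p.2, p.1⟩ : Σ _ : ℕ, ℕ))
  · rintro ⟨n, d⟩ hp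
    simp only [Finset.mem_sigma, Finset.mem_Icc, Nat.mem_divisors] at hp ⊢
    obtain ⟨⟨hn1, hnN⟩, hdn, hn0⟩ := hp
    have hd0 : 0 < d := Nat.pos_of_dvd_of_pos hdn (Nat.pos_of_ne_zero hn0)
    exact ⟨⟨hd0, le_trans (Nat.le_of_dvd (Nat.pos_of_ne_zero hn0) hdn) hnN⟩,
      Nat.div_pos (Nat.le_of_dvd (Nat.pos_of_ne_zero hn0) hdn) hd0,
      Nat.div_le_div_right hnN⟩
  · rintro ⟨d, m⟩ hp
    simp only [Finset.mem_sigma, Finset.mem_Icc, Nat.mem_divisors] at hp ⊢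
    obtain ⟨⟨hd1, hdN⟩, hm1, hmNd⟩ := hp
    refine ⟨⟨Nat.one_le_iff_ne_zero.mpr (by positivity), ?_⟩, dvd_mul_right _ _, by positivity⟩
    calc d * m ≤ d * (N / d) := Nat.mul_le_mul_left d hmNd
      _ ≤ N := Nat.mul_div_le N d
  · rintro ⟨n, d⟩ hp
    simp only [Finset.mem_sigma, Finset.mem_Icc, Nat.mem_divisors] at hp
    obtain ⟨⟨hn1, hnN⟩, hdn, hn0⟩ := hp
    simp only [Nat.mul_div_cancel' hdn]
  · rintro ⟨d, m⟩ hp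
    simp only [Finset.mem_sigma, Finset.mem_Icc, Nat.mem_divisors] at hp
    obtain ⟨⟨hd1, hdN⟩, hm1, hmNd⟩ := hp
    simp only [Nat.mul_div_cancel_left m (Nat.lt_of_lt_of_le Nat.zero_lt_one hd1)]
  · rintro ⟨n, d⟩ hp
    rfl

-- harmonic bound
lemma sum_inv_le (N : ℕ) : ∑ n ∈ Icc 1 N, (1 : ℝ) / n ≤ 1 + Real.log N := by
  have h := harmonic_le_one_add_log N
  have : ((harmonic N : ℚ) : ℝ) = ∑ n ∈ Icc 1 N, (1 : ℝ) / n := by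
    rw [harmonic_eq_sum_Icc]
    push_cast
    simp [one_div]
  rw [← this]
  exact_mod_cast h

lemma lemA : ∀ r : ℕ, ∃ C : ℝ, 0 < C ∧ ∀ N : ℕ,
    ∑ n ∈ Icc 1 N, (n.divisors.card : ℝ) ^ r / n ≤ C * (1 + Real.log N) ^ (2 ^ r) := by
  intro r
  induction r with
  | zero =>
    refine ⟨1, one_pos, fun N => ?_⟩
    simp only [pow_zero, pow_one, one_mul]
    calc ∑ n ∈ Icc 1 N, (1 : ℝ) / n ≤ 1 + Real.log N := sum_inv_le N
  | succ r ih =>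
    obtain ⟨C, hC, hA⟩ := ih
    refine ⟨C * C, by positivity, fun N => ?_⟩
    have hlogN : (0 : ℝ) ≤ Real.log N := Real.log_natCast_nonneg N
    calc ∑ n ∈ Icc 1 N, (n.divisors.card : ℝ) ^ (r + 1) / n
        = ∑ n ∈ Icc 1 N, ∑ d ∈ n.divisors,
            (((d * (n / d)).divisors.card : ℝ)) ^ r / ((d * (n / d) : ℕ) : ℝ) := by
          apply Finset.sum_congr rfl
          intro n hn
          rw [Finset.mem_Icc] at hn
          have heq : ∀ d ∈ n.divisors,
              (((d * (n / d)).divisors.card : ℝ)) ^ r / ((d * (n / d) : ℕ) : ℝ)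
                = (n.divisors.card : ℝ) ^ r / n := fun d hd => by
            rw [Nat.mul_div_cancel' (Nat.mem_divisors.mp hd).1]
          rw [Finset.sum_congr rfl heq, Finset.sum_const, nsmul_eq_mul]
          ring
      _ = ∑ d ∈ Icc 1 N, ∑ m ∈ Icc 1 (N / d), (((d * m).divisors.card : ℝ)) ^ r / ((d * m : ℕ) : ℝ) :=
          sum_swap_div N (fun d m => (((d * m).divisors.card : ℝ)) ^ r / ((d * m : ℕ) : ℝ))
      _ ≤ ∑ d ∈ Icc 1 N, ∑ m ∈ Icc 1 (N / d),
            ((d.divisors.card : ℝ) ^ r / d) * ((m.divisors.card : ℝ) ^ r / m) := by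
          apply Finset.sum_le_sum; intro d hd
          apply Finset.sum_le_sum; intro m hm
          rw [Finset.mem_Icc] at hd hm
          have h1 : ((d * m).divisors.card : ℝ) ≤ (d.divisors.card : ℝ) * m.divisors.card := by
            exact_mod_cast tau_mul_le d m (by omega) (by omega)
          rw [div_mul_div_comm, ← mul_pow]
          push_cast
          push_cast at h1
          gcongr
          all_goals first | positivity | exact h1
      _ = ∑ d ∈ Icc 1 N, ((d.divisors.card : ℝ) ^ r / d) *
            ∑ m ∈ Icc 1 (N / d), ((m.divisors.card : ℝ) ^ r / m) := by
          simp [Finset.mul_sum]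
      _ ≤ ∑ d ∈ Icc 1 N, ((d.divisors.card : ℝ) ^ r / d) * (C * (1 + Real.log N) ^ (2 ^ r)) := by
          apply Finset.sum_le_sum; intro d hd
          rw [Finset.mem_Icc] at hd
          have hNd1 : 1 ≤ N / d := (Nat.one_le_div_iff (by omega)).mpr hd.2
          have hlog : Real.log ((N / d : ℕ) : ℝ) ≤ Real.log N := by
            apply Real.log_le_log (by exact_mod_cast hNd1)
            exact_mod_cast Nat.div_le_self N d
          apply mul_le_mul_of_nonneg_left _ (by positivity)
          calc ∑ m ∈ Icc 1 (N / d), ((m.divisors.card : ℝ)) ^ r / m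
              ≤ C * (1 + Real.log ((N / d : ℕ) : ℝ)) ^ (2 ^ r) := hA (N / d)
            _ ≤ C * (1 + Real.log N) ^ (2 ^ r) := by
                gcongr
                all_goals (have := Real.log_natCast_nonneg (N / d); linarith)
      _ = (∑ d ∈ Icc 1 N, (d.divisors.card : ℝ) ^ r / d) * (C * (1 + Real.log N) ^ (2 ^ r)) := by
          rw [← Finset.sum_mul]
      _ ≤ (C * (1 + Real.log N) ^ (2 ^ r)) * (C * (1 + Real.log N) ^ (2 ^ r)) := by
          apply mul_le_mul_of_nonneg_right (hA N) (by positivity)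
      _ = C * C * (1 + Real.log N) ^ (2 ^ (r + 1)) := by
          have h2 : 2 ^ (r + 1) = 2 ^ r + 2 ^ r := by rw [pow_succ]; ring
          rw [h2, pow_add]; ring

lemma lemB : ∀ r : ℕ, ∃ C : ℝ, 0 < C ∧ ∀ N : ℕ,
    ∑ n ∈ Icc 1 N, (n.divisors.card : ℝ) ^ r ≤ C * N * (1 + Real.log N) ^ (2 ^ r - 1) := by
  intro r
  induction r with
  | zero =>
    refine ⟨1, one_pos, fun N => ?_⟩
    simp [Nat.card_Icc]
  | succ r ih =>
    obtain ⟨C, hC, hB⟩ := ih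
    obtain ⟨D, hD, hA⟩ := lemA r
    refine ⟨C * D, by positivity, fun N => ?_⟩
    have hlogN : (0 : ℝ) ≤ Real.log N := Real.log_natCast_nonneg N
    calc ∑ n ∈ Icc 1 N, (n.divisors.card : ℝ) ^ (r + 1)
        = ∑ n ∈ Icc 1 N, ∑ d ∈ n.divisors, (((d * (n / d)).divisors.card : ℝ)) ^ r := by
          apply Finset.sum_congr rfl
          intro n hn
          have heq : ∀ d ∈ n.divisors,
              (((d * (n / d)).divisors.card : ℝ)) ^ r = (n.divisors.card : ℝ) ^ r := fun d hd => by
            rw [Nat.mul_div_cancel' (Nat.mem_divisors.mp hd).1]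
          rw [Finset.sum_congr rfl heq, Finset.sum_const, nsmul_eq_mul]
          ring
      _ = ∑ d ∈ Icc 1 N, ∑ m ∈ Icc 1 (N / d), (((d * m).divisors.card : ℝ)) ^ r :=
          sum_swap_div N (fun d m => (((d * m).divisors.card : ℝ)) ^ r)
      _ ≤ ∑ d ∈ Icc 1 N, ∑ m ∈ Icc 1 (N / d),
            (d.divisors.card : ℝ) ^ r * (m.divisors.card : ℝ) ^ r := by
          apply Finset.sum_le_sum; intro d hd
          apply Finset.sum_le_sum; intro m hm
          rw [Finset.mem_Icc] at hd hm
          have h1 : ((d * m).divisors.card : ℝ) ≤ (d.divisors.card : ℝ) * m.divisors.card := by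
            exact_mod_cast tau_mul_le d m (by omega) (by omega)
          rw [← mul_pow]
          gcongr
          all_goals first | positivity | exact h1
      _ = ∑ d ∈ Icc 1 N, (d.divisors.card : ℝ) ^ r * ∑ m ∈ Icc 1 (N / d),
            (m.divisors.card : ℝ) ^ r := by
          simp [Finset.mul_sum]
      _ ≤ ∑ d ∈ Icc 1 N, (d.divisors.card : ℝ) ^ r / d *
            (C * N * (1 + Real.log N) ^ (2 ^ r - 1)) := by
          apply Finset.sum_le_sum; intro d hd
          rw [Finset.mem_Icc] at hd
          have hd0 : (0:ℝ) < d := by exact_mod_cast hd.1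
          have hNd1 : 1 ≤ N / d := (Nat.one_le_div_iff (by omega)).mpr hd.2
          have hlog : Real.log ((N / d : ℕ) : ℝ) ≤ Real.log N := by
            apply Real.log_le_log (by exact_mod_cast hNd1)
            exact_mod_cast Nat.div_le_self N d
          have hlogNd : (0 : ℝ) ≤ Real.log ((N / d : ℕ) : ℝ) := Real.log_natCast_nonneg _
          calc (d.divisors.card : ℝ) ^ r * ∑ m ∈ Icc 1 (N / d), (m.divisors.card : ℝ) ^ r
              ≤ (d.divisors.card : ℝ) ^ r *
                  (C * ((N / d : ℕ) : ℝ) * (1 + Real.log ((N / d : ℕ) : ℝ)) ^ (2 ^ r - 1)) := by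
                apply mul_le_mul_of_nonneg_left (hB (N / d)) (by positivity)
            _ ≤ (d.divisors.card : ℝ) ^ r *
                  (C * ((N : ℝ) / d) * (1 + Real.log N) ^ (2 ^ r - 1)) := by
                apply mul_le_mul_of_nonneg_left _ (by positivity)
                gcongr
                all_goals first | exact Nat.cast_div_le | linarith
            _ = (d.divisors.card : ℝ) ^ r / d * (C * N * (1 + Real.log N) ^ (2 ^ r - 1)) := by
                field_simp
      _ = (∑ d ∈ Icc 1 N, (d.divisors.card : ℝ) ^ r / d) *
            (C * N * (1 + Real.log N) ^ (2 ^ r - 1)) := by rw [← Finset.sum_mul]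
      _ ≤ (D * (1 + Real.log N) ^ (2 ^ r)) * (C * N * (1 + Real.log N) ^ (2 ^ r - 1)) := by
          apply mul_le_mul_of_nonneg_right (hA N) (by positivity)
      _ = C * D * N * (1 + Real.log N) ^ (2 ^ (r + 1) - 1) := by
          have h2 : 2 ^ (r + 1) - 1 = 2 ^ r + (2 ^ r - 1) := by
            have : 1 ≤ 2 ^ r := Nat.one_le_two_pow
            have h3 : 2 ^ (r + 1) = 2 ^ r + 2 ^ r := by rw [pow_succ]; ring
            omega
          rw [h2, pow_add]; ring

/-- For any fixed positive integer `r` and real `X ≥ 2`, the sum over natural numbers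
`x ≤ X` of `τ(x)^r` is `O(X (log X)^(2^r - 1))`, where `τ` is the divisor function. -/
theorem divisor_power_sum_bound (r : ℕ) (hr : 0 < r) :
    ∃ C : ℝ, 0 < C ∧ ∀ X : ℝ, 2 ≤ X →
      ∑ x ∈ Finset.Icc 1 ⌊X⌋₊, ((x.divisors.card : ℝ)) ^ r
        ≤ C * X * Real.log X ^ (2 ^ r - 1) := by
  obtain ⟨C, hC, hB⟩ := lemB r
  refine ⟨C * 3 ^ (2 ^ r - 1), by positivity, fun X hX => ?_⟩
  set N := ⌊X⌋₊ with hN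
  have hX0 : (0:ℝ) < X := by linarith
  have hNX : (N : ℝ) ≤ X := Nat.floor_le hX0.le
  have hN2 : 2 ≤ N := Nat.le_floor (by exact_mod_cast hX)
  have hlogX : Real.log 2 ≤ Real.log X := Real.log_le_log (by norm_num) hX
  have hlog2 : (0.6931471803 : ℝ) < Real.log 2 := Real.log_two_gt_d9
  have hlogN : Real.log (N : ℝ) ≤ Real.log X := by
    apply Real.log_le_log _ hNX
    have : (0:ℕ) < N := by omega
    exact_mod_cast this
  have hkey : 1 + Real.log (N : ℝ) ≤ 3 * Real.log X := by
    have h0 : (0:ℝ) ≤ Real.log (N:ℝ) := Real.log_natCast_nonneg N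
    nlinarith
  calc ∑ x ∈ Finset.Icc 1 N, ((x.divisors.card : ℝ)) ^ r
      ≤ C * N * (1 + Real.log N) ^ (2 ^ r - 1) := hB N
    _ ≤ C * X * (3 * Real.log X) ^ (2 ^ r - 1) := by
        gcongr
        all_goals (have h0 : (0:ℝ) ≤ Real.log (N:ℝ) := Real.log_natCast_nonneg N; linarith)
    _ = C * 3 ^ (2 ^ r - 1) * X * Real.log X ^ (2 ^ r - 1) := by
        rw [mul_pow]; ring
end

section
/- Let b, t, c be integers and r, s positive integers with gcd(b,r) = gcd(c,s) = 1. If |b/r − t·(c/s)| < 1/(r·s), then b/r = t·c/s as rational numbers and r = s / gcd(t, s). -/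
/-- Let `b, t, c` be integers and `r, s` positive integers with `gcd(b,r) = gcd(c,s) = 1`.
If `|b/r − t·(c/s)| < 1/(r·s)`, then `b/r = t·c/s` as rational numbers and
`r = s / gcd(t, s)`. -/
theorem rational_approx_coincide (b t c : ℤ) (r s : ℕ) (hr : 0 < r) (hs : 0 < s)
    (hbr : Int.gcd b r = 1) (hcs : Int.gcd c s = 1)
    (h : |(b : ℚ) / r - t * ((c : ℚ) / s)| < 1 / (r * s)) :
    (b : ℚ) / r = t * c / s ∧ r = s / Int.gcd t s := by
  have hrQ : (0:ℚ) < r := by exact_mod_cast hr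
  have hsQ : (0:ℚ) < s := by exact_mod_cast hs
  have hr0 : (r:ℤ) ≠ 0 := by exact_mod_cast hr.ne'
  -- key integer identity
  have key : b * (s:ℤ) = t * c * r := by
    have h1 : |((b * s - t * c * r : ℤ) : ℚ)| < 1 := by
      have heq : ((b * s - t * c * r : ℤ) : ℚ) = ((b:ℚ)/r - t * ((c:ℚ)/s)) * (r*s) := by
        push_cast
        field_simp
      rw [heq, abs_mul, abs_of_pos (by positivity : (0:ℚ) < (r:ℚ)*s)]
      have h2 := mul_lt_mul_of_pos_right h (by positivity : (0:ℚ) < (r:ℚ)*s)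
      rwa [one_div, inv_mul_cancel₀ (by positivity : ((r:ℚ)*s) ≠ 0)] at h2
    have h3 : |(b * s - t * c * r : ℤ)| < 1 := by exact_mod_cast h1
    have h4 := Int.abs_lt_one_iff.mp h3
    omega
  have keyQ : (b:ℚ) * s = t * c * r := by exact_mod_cast key
  constructor
  · field_simp
    linear_combination keyQ
  -- r ∣ s
  have hcop_rb : IsCoprime (r:ℤ) b := by
    rw [Int.isCoprime_iff_gcd_eq_one, Int.gcd_comm]
    exact hbr
  have hrs : (r:ℤ) ∣ (s:ℤ) :=
    hcop_rb.dvd_of_dvd_mul_left ⟨t*c, by linarith [key]⟩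
  obtain ⟨k, hsk⟩ : r ∣ s := Int.ofNat_dvd.mp hrs
  have hk : 0 < k := by
    rcases Nat.eq_zero_or_pos k with h0 | h0
    · subst h0; simp at hsk; omega
    · exact h0
  have hk0 : (k:ℤ) ≠ 0 := by exact_mod_cast hk.ne'
  have hskZ : (s:ℤ) = r * k := by exact_mod_cast hsk
  have hbk : b * (k:ℤ) = t * c := by
    apply mul_right_cancel₀ hr0
    linear_combination key - b * hskZ
  -- k ∣ t
  have hcop_ck : IsCoprime (c:ℤ) (k:ℤ) :=
    (Int.isCoprime_iff_gcd_eq_one.mpr hcs).of_isCoprime_of_dvd_right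
      ⟨r, by rw [hskZ]; ring⟩
  have hkt : (k:ℤ) ∣ t :=
    hcop_ck.symm.dvd_of_dvd_mul_right ⟨b, by linarith [hbk]⟩
  set g := Int.gcd t s with hg
  have hkg : k ∣ g := by
    have : (k:ℤ) ∣ (g:ℤ) := by rw [hg, Int.coe_gcd]; exact dvd_gcd hkt (by exact_mod_cast Dvd.intro_left r hsk.symm)
    exact_mod_cast this
  obtain ⟨m, hgm⟩ := hkg
  -- m ∣ r
  have hgs : g ∣ s := by
    have : (g:ℤ) ∣ (s:ℤ) := by rw [hg]; exact Int.gcd_dvd_right _ _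
    exact_mod_cast this
  have hmr : m ∣ r := by
    have h4 : k * m ∣ k * r := by
      rw [← hgm, Nat.mul_comm k r, ← hsk]; exact hgs
    exact (Nat.mul_dvd_mul_iff_left hk).mp h4
  -- m ∣ b
  obtain ⟨u, hu⟩ : (g:ℤ) ∣ t := by rw [hg]; exact Int.gcd_dvd_left _ _
  have hmb : (m:ℤ) ∣ b := by
    refine ⟨u * c, ?_⟩
    apply mul_left_cancel₀ hk0
    have : (g:ℤ) = (k:ℤ) * m := by exact_mod_cast hgm
    calc (k:ℤ) * b = b * k := by ring
      _ = t * c := hbk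
      _ = (g:ℤ) * u * c := by rw [hu]
      _ = (k:ℤ) * ((m:ℤ) * (u * c)) := by rw [this]; ring
  have hm1 : m = 1 := by
    have : (m:ℤ) ∣ (Int.gcd b r : ℤ) :=
      by rw [Int.coe_gcd]; exact dvd_gcd hmb (by exact_mod_cast hmr)
    rw [hbr] at this
    have : m ∣ 1 := by exact_mod_cast this
    exact Nat.dvd_one.mp this
  have hgk : g = k := by rw [hgm, hm1, Nat.mul_one]
  rw [hgk, hsk]
  exact (Nat.mul_div_cancel _ hk).symm
end

section
/- If a real number β lies in the union over q ≤ Y, gcd(b,q)=1 of intervals [b/q − Y/(qP^d), b/q + Y/(qP^d)] for each coordinate β₁,…,β_R of β⃗ = α⃗ B, where B is an invertible R×R integer matrix with entries bounded by C in absolute value and Y = Q^{1/R}/(R·C), then each coordinate α_j of α⃗ admits a rational approximation a_j'/q' with a common denominator q' ≤ R! C^R Y^R ≤ Q and |α_j − a_j'/q'| ≤ Q/(q' P^d) for all j. -/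
open Finset

/-- `(n+1)! ≤ (n+1)^n`. -/
theorem factorial_succ_le_pow_aux : ∀ n : ℕ, (n + 1).factorial ≤ (n + 1) ^ n := by
  intro n
  induction n with
  | zero => simp [Nat.factorial]
  | succ m ih =>
    calc (m + 2).factorial = (m + 2) * (m + 1).factorial := rfl
      _ ≤ (m + 2) * (m + 1) ^ m := Nat.mul_le_mul_left _ ih
      _ ≤ (m + 2) * (m + 2) ^ m := by
          exact Nat.mul_le_mul_left _ (Nat.pow_le_pow_left (by omega) m)
      _ = (m + 2) ^ (m + 1) := by ring

/-- `R * R! ≤ R ^ R` for `R ≥ 1`. -/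
theorem mul_factorial_le_pow_self (R : ℕ) (hR : 1 ≤ R) : R * R.factorial ≤ R ^ R := by
  obtain ⟨m, rfl⟩ : ∃ m, R = m + 1 := ⟨R - 1, by omega⟩
  calc (m + 1) * (m + 1).factorial ≤ (m + 1) * (m + 1) ^ m :=
        Nat.mul_le_mul_left _ (factorial_succ_le_pow_aux m)
    _ = (m + 1) ^ (m + 1) := by ring

/-- Simultaneous rational approximation after an invertible integral linear change:
if `β⃗ = α⃗ B` with `B` an invertible `R × R` integer matrix having entries bounded by
`C`, `Y = Q^{1/R}/(R·C)`, and every coordinate `β_k` admits an approximation `b/r` with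
`r ≤ Y`, `gcd(b,r)=1`, `|β_k − b/r| ≤ Y/(rP^d)`, then the coordinates `α_j` admit
rational approximations `a_j'/q'` with a common denominator
`q' ≤ R!·C^R·Y^R ≤ Q` and `|α_j − a_j'/q'| ≤ Q/(q'P^d)` for all `j`. -/
theorem simultaneous_rational_approximation (R d : ℕ) (hR : 1 ≤ R) (hd : 2 ≤ d)
    (C Q P Y : ℝ) (hQ : 0 < Q) (hP : 1 ≤ P)
    (B : Matrix (Fin R) (Fin R) ℤ) (hdet : B.det ≠ 0)
    (hbd : ∀ i j, |(B i j : ℝ)| ≤ C)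
    (α β : Fin R → ℝ) (hβ : ∀ k, β k = ∑ j, α j * (B j k : ℝ))
    (hY : Y = Q ^ ((1 : ℝ) / R) / (R * C))
    (happrox : ∀ k, ∃ (b : ℤ) (r : ℕ), 1 ≤ r ∧ (r : ℝ) ≤ Y ∧ Int.gcd b r = 1 ∧
      |β k - (b : ℝ) / r| ≤ Y / (r * P ^ d)) :
    ∃ (q' : ℕ) (a' : Fin R → ℤ), 1 ≤ q' ∧
      (q' : ℝ) ≤ (R.factorial : ℝ) * C ^ R * Y ^ R ∧
      (R.factorial : ℝ) * C ^ R * Y ^ R ≤ Q ∧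
      ∀ j, |α j - (a' j : ℝ) / q'| ≤ Q / (q' * P ^ d) := by
  haveI : NeZero R := ⟨by omega⟩
  haveI : Nonempty (Fin R) := ⟨⟨0, hR⟩⟩
  choose b r hr1 hrY hgcd herr using happrox
  have hPd : (0:ℝ) < P ^ d := by positivity
  have hRR : (0:ℝ) < (R:ℝ) := by exact_mod_cast hR
  -- C ≥ 1
  have hC1 : (1:ℝ) ≤ C := by
    by_contra hc
    push_neg at hc
    apply hdet
    have hB0 : B = 0 := by
      ext i j
      simp only [Matrix.zero_apply]
      have h2 : |(B i j : ℝ)| < 1 := lt_of_le_of_lt (hbd i j) hc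
      have h3 : ((|B i j| : ℤ) : ℝ) < 1 := by push_cast; exact h2
      have h4 : |B i j| < 1 := by exact_mod_cast h3
      rw [abs_lt] at h4
      omega
    rw [hB0, Matrix.det_zero]
  have hC0 : (0:ℝ) < C := lt_of_lt_of_le one_pos hC1
  -- Y ≥ 1
  have hY1 : (1:ℝ) ≤ Y := le_trans (by exact_mod_cast hr1 ⟨0, hR⟩) (hrY ⟨0, hR⟩)
  have hY0 : (0:ℝ) < Y := lt_of_lt_of_le one_pos hY1
  -- (R*C*Y)^R = Q
  have hQeq : ((R:ℝ) * C * Y) ^ R = Q := by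
    have h1 : (R:ℝ) * C * Y = Q ^ ((1:ℝ)/R) := by
      rw [hY]; field_simp
    rw [h1, ← Real.rpow_natCast (Q ^ ((1:ℝ)/R)) R, ← Real.rpow_mul hQ.le]
    rw [one_div, inv_mul_cancel₀ (by exact_mod_cast hRR.ne')]
    exact Real.rpow_one Q
  set K : ℝ := (R.factorial : ℝ) * C ^ R with hK
  have hK0 : 0 ≤ K := by rw [hK]; positivity
  have hKY0 : 0 ≤ K * Y ^ R := mul_nonneg hK0 (pow_nonneg hY0.le R)
  -- R * K * Y^R ≤ Q
  have hRKQ : (R:ℝ) * (K * Y ^ R) ≤ Q := by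
    have h1 : ((R * R.factorial : ℕ) : ℝ) ≤ ((R ^ R : ℕ) : ℝ) := by
      exact_mod_cast mul_factorial_le_pow_self R hR
    push_cast at h1
    calc (R:ℝ) * (K * Y ^ R) = ((R:ℝ) * (R.factorial : ℝ)) * (C ^ R * Y ^ R) := by
          rw [hK]; ring
      _ ≤ (R:ℝ) ^ R * (C ^ R * Y ^ R) := by
          apply mul_le_mul_of_nonneg_right h1 (by positivity)
      _ = ((R:ℝ) * C * Y) ^ R := by rw [mul_pow, mul_pow]; ring
      _ = Q := hQeq
  have hKQ : K * Y ^ R ≤ Q := by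
    have h1 : (1:ℝ) * (K * Y ^ R) ≤ (R:ℝ) * (K * Y ^ R) :=
      mul_le_mul_of_nonneg_right (by exact_mod_cast hR) hKY0
    linarith
  -- adjugate and determinant bounds
  set M : Matrix (Fin R) (Fin R) ℝ := (Int.castRingHom ℝ).mapMatrix B with hM
  have hMdet : M.det = (B.det : ℝ) := (RingHom.map_det (Int.castRingHom ℝ) B).symm
  have hMadj : ∀ k j, (B.adjugate k j : ℝ) = M.adjugate k j := by
    intro k j
    rw [hM, ← RingHom.map_adjugate]
    rfl
  have hDle : |(B.det : ℝ)| ≤ K := by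
    rw [← hMdet, hK]
    have := Matrix.det_le (A := M) (abv := AbsoluteValue.abs) (x := C)
      (fun i j => hbd i j)
    simpa [Fintype.card_fin, nsmul_eq_mul] using this
  have hadj : ∀ k j, |(B.adjugate k j : ℝ)| ≤ K := by
    intro k j
    rw [hMadj, Matrix.adjugate_apply, hK]
    have := Matrix.det_le (A := M.updateRow j (Pi.single k 1))
      (abv := AbsoluteValue.abs) (x := C) ?_
    · simpa [Fintype.card_fin, nsmul_eq_mul] using this
    · intro i l
      rw [Matrix.updateRow_apply]
      split
      · rw [Pi.single_apply]
        split
        · simpa using hC1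
        · simpa using hC0.le
      · exact hbd i l
  -- determinant facts
  have hnatAbsR : (B.det.natAbs : ℝ) = |(B.det : ℝ)| := by
    rw [Nat.cast_natAbs, Int.cast_abs]
  have hD0 : (1:ℝ) ≤ |(B.det : ℝ)| := by
    rw [← hnatAbsR]
    have h1 : 1 ≤ B.det.natAbs := by omega
    exact_mod_cast h1
  have hDpos : (0:ℝ) < |(B.det : ℝ)| := lt_of_lt_of_le one_pos hD0
  have hdetR : (B.det : ℝ) ≠ 0 := by exact_mod_cast hdet
  -- the common denominator and numerators
  set pr : ℝ := ∏ k, (r k : ℝ) with hpr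
  have hrpos : ∀ k, (0:ℝ) < (r k : ℝ) := fun k => by exact_mod_cast hr1 k
  have hprpos : 0 < pr := by rw [hpr]; exact Finset.prod_pos (fun k _ => hrpos k)
  have hcastq : ((B.det.natAbs * ∏ k, r k : ℕ) : ℝ) = (B.det.natAbs : ℝ) * pr := by
    rw [hpr]; push_cast; ring
  refine ⟨B.det.natAbs * ∏ k, r k,
    fun j => B.det.sign * ∑ k, b k * (∏ i ∈ univ.erase k, (r i : ℤ)) * B.adjugate k j,
    ?_, ?_, ?_, ?_⟩
  · have h2 : ∏ k, r k ≠ 0 := Finset.prod_ne_zero_iff.2 (fun k _ => by have := hr1 k; omega)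
    have h1 : B.det.natAbs ≠ 0 := by omega
    exact Nat.one_le_iff_ne_zero.2 (Nat.mul_ne_zero h1 h2)
  · -- q' ≤ R! C^R Y^R
    rw [hcastq]
    have h1 : (B.det.natAbs : ℝ) = |(B.det : ℝ)| := hnatAbsR
    have h2 : pr ≤ Y ^ R := by
      rw [hpr]
      calc (∏ k, (r k : ℝ)) ≤ ∏ _k : Fin R, Y :=
            Finset.prod_le_prod (fun k _ => (hrpos k).le) (fun k _ => hrY k)
        _ = Y ^ R := by rw [Finset.prod_const, Finset.card_univ, Fintype.card_fin]
    calc (B.det.natAbs : ℝ) * pr ≤ K * Y ^ R := by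
          rw [h1]; exact mul_le_mul hDle h2 hprpos.le hK0
      _ = (R.factorial : ℝ) * C ^ R * Y ^ R := by rw [hK]
  · exact hKQ
  · intro j
    -- key algebraic identity
    have hdetα : ∀ j, (∑ k, β k * (B.adjugate k j : ℝ)) = (B.det : ℝ) * α j := by
      intro j
      have hmul : ∀ i, (∑ k, (B i k : ℝ) * (B.adjugate k j : ℝ)) =
          (if i = j then (B.det : ℝ) else 0) := by
        intro i
        have h := congrFun (congrFun (Matrix.mul_adjugate B) i) j
        rw [Matrix.mul_apply, Matrix.smul_apply, Matrix.one_apply, smul_eq_mul] at h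
        have h2 := congrArg (fun z : ℤ => (z : ℝ)) h
        push_cast at h2
        rw [← Int.cast_det] at h2
        rw [h2]
        split <;> simp
      calc ∑ k, β k * (B.adjugate k j : ℝ)
          = ∑ k, (∑ i, α i * (B i k : ℝ)) * (B.adjugate k j : ℝ) :=
            Finset.sum_congr rfl (fun k _ => by rw [hβ k])
        _ = ∑ k, ∑ i, α i * (B i k : ℝ) * (B.adjugate k j : ℝ) :=
            Finset.sum_congr rfl (fun k _ => by rw [Finset.sum_mul])
        _ = ∑ i, ∑ k, α i * (B i k : ℝ) * (B.adjugate k j : ℝ) := Finset.sum_comm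
        _ = ∑ i, α i * ∑ k, ((B i k : ℝ) * (B.adjugate k j : ℝ)) := by
            refine Finset.sum_congr rfl (fun i _ => ?_)
            rw [Finset.mul_sum]
            exact Finset.sum_congr rfl (fun k _ => by ring)
        _ = ∑ i, α i * (if i = j then (B.det : ℝ) else 0) :=
            Finset.sum_congr rfl (fun i _ => by rw [hmul i])
        _ = (B.det : ℝ) * α j := by simp [mul_comm]
    -- sum rewriting
    set S : ℤ := ∑ k, b k * (∏ i ∈ univ.erase k, (r i : ℤ)) * B.adjugate k j with hS
    have hsum : ∑ k, ((b k : ℝ)/(r k)) * (B.adjugate k j : ℝ) = (S : ℝ) / pr := by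
      rw [hS]
      push_cast
      rw [Finset.sum_div]
      refine Finset.sum_congr rfl (fun k _ => ?_)
      have hfac : pr = (r k : ℝ) * ∏ i ∈ univ.erase k, (r i : ℝ) := by
        rw [hpr]; exact (Finset.mul_prod_erase univ _ (mem_univ k)).symm
      have hpe : (0:ℝ) < ∏ i ∈ univ.erase k, (r i : ℝ) :=
        Finset.prod_pos (fun i _ => hrpos i)
      rw [hfac, div_mul_eq_mul_div,
        div_eq_div_iff (hrpos k).ne' (mul_pos (hrpos k) hpe).ne']
      ring
    -- a'/q' = S/(det * pr)
    have haq : ((B.det.sign * S : ℤ) : ℝ) / ((B.det.natAbs * ∏ k, r k : ℕ) : ℝ)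
        = (S : ℝ) / ((B.det : ℝ) * pr) := by
      have hsd : B.det.sign * B.det = (B.det.natAbs : ℤ) := by
        rcases lt_trichotomy B.det 0 with h | h | h
        · rw [Int.sign_eq_neg_one_iff_neg.2 h]; omega
        · exact absurd h hdet
        · rw [Int.sign_eq_one_iff_pos.2 h]; omega
      have hsdR : (B.det.sign : ℝ) * (B.det : ℝ) = |(B.det : ℝ)| := by
        have h5 := congrArg (fun z : ℤ => (z : ℝ)) hsd
        push_cast at h5
        rw [← Int.cast_det] at h5
        simpa [hnatAbsR] using h5
      have hnpos : (0:ℝ) < (B.det.natAbs : ℝ) * pr := by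
        apply mul_pos _ hprpos
        rw [hnatAbsR]; exact hDpos
      rw [hcastq, div_eq_div_iff hnpos.ne' (mul_ne_zero hdetR hprpos.ne')]
      push_cast
      rw [hnatAbsR, ← Int.cast_det]
      linear_combination ((S : ℝ) * pr) * hsdR
    -- the error representation
    have hkey : α j - ((B.det.sign * S : ℤ) : ℝ) / ((B.det.natAbs * ∏ k, r k : ℕ) : ℝ)
        = (∑ k, (β k - (b k : ℝ)/(r k)) * (B.adjugate k j : ℝ)) / (B.det : ℝ) := by
      rw [haq]
      have hexp : ∑ k, (β k - (b k : ℝ)/(r k)) * (B.adjugate k j : ℝ)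
          = (B.det : ℝ) * α j - (S : ℝ) / pr := by
        rw [← hdetα j, ← hsum, ← Finset.sum_sub_distrib]
        exact Finset.sum_congr rfl (fun k _ => by ring)
      rw [hexp]
      field_simp
    rw [hkey, abs_div]
    -- the estimate
    have hbound : |∑ k, (β k - (b k : ℝ)/(r k)) * (B.adjugate k j : ℝ)|
        ≤ (R:ℝ) * (K * Y ^ R) / (pr * P ^ d) := by
      calc |∑ k, (β k - (b k : ℝ)/(r k)) * (B.adjugate k j : ℝ)|
          ≤ ∑ k, |(β k - (b k : ℝ)/(r k)) * (B.adjugate k j : ℝ)| :=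
            Finset.abs_sum_le_sum_abs _ _
        _ ≤ ∑ _k : Fin R, K * Y ^ R / (pr * P ^ d) := by
            refine Finset.sum_le_sum (fun k _ => ?_)
            rw [abs_mul]
            have h1 : |β k - (b k : ℝ)/(r k)| ≤ Y / ((r k : ℝ) * P ^ d) := herr k
            have h2 : Y / ((r k : ℝ) * P ^ d) ≤ Y ^ R / (pr * P ^ d) := by
              rw [div_le_div_iff₀ (mul_pos (hrpos k) hPd) (mul_pos hprpos hPd)]
              have hfac : pr = (r k : ℝ) * ∏ i ∈ univ.erase k, (r i : ℝ) := by
                rw [hpr]; exact (Finset.mul_prod_erase univ _ (mem_univ k)).symm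
              have hpe : ∏ i ∈ univ.erase k, (r i : ℝ) ≤ Y ^ (R - 1) := by
                calc (∏ i ∈ univ.erase k, (r i : ℝ)) ≤ ∏ _i ∈ univ.erase k, Y :=
                      Finset.prod_le_prod (fun i _ => (hrpos i).le) (fun i _ => hrY i)
                  _ = Y ^ (R - 1) := by
                      rw [Finset.prod_const, Finset.card_erase_of_mem (mem_univ k),
                        Finset.card_univ, Fintype.card_fin]
              have hYR : Y * Y ^ (R - 1) = Y ^ R := by
                rw [← pow_succ', Nat.sub_add_cancel hR]
              calc Y * (pr * P ^ d)
                  = (Y * ∏ i ∈ univ.erase k, (r i : ℝ)) * ((r k : ℝ) * P ^ d) := by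
                    rw [hfac]; ring
                _ ≤ (Y * Y ^ (R - 1)) * ((r k : ℝ) * P ^ d) := by
                    apply mul_le_mul_of_nonneg_right _ (mul_pos (hrpos k) hPd).le
                    exact mul_le_mul_of_nonneg_left hpe hY0.le
                _ = Y ^ R * ((r k : ℝ) * P ^ d) := by rw [hYR]
            calc |β k - (b k : ℝ)/(r k)| * |(B.adjugate k j : ℝ)|
                ≤ (Y ^ R / (pr * P ^ d)) * K := by
                  apply mul_le_mul (h1.trans h2) (hadj k j) (abs_nonneg _)
                  exact div_nonneg (pow_nonneg hY0.le R) (mul_pos hprpos hPd).le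
              _ = K * Y ^ R / (pr * P ^ d) := by ring
        _ = (R:ℝ) * (K * Y ^ R) / (pr * P ^ d) := by
            rw [Finset.sum_const, Finset.card_univ, Fintype.card_fin, nsmul_eq_mul]
            ring
    have hq'cast : ((B.det.natAbs * ∏ k, r k : ℕ) : ℝ) = |(B.det : ℝ)| * pr := by
      rw [hcastq, hnatAbsR]
    rw [hq'cast]
    calc |∑ k, (β k - (b k : ℝ)/(r k)) * (B.adjugate k j : ℝ)| / |(B.det : ℝ)|
        ≤ ((R:ℝ) * (K * Y ^ R) / (pr * P ^ d)) / |(B.det : ℝ)| :=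
          div_le_div_of_nonneg_right hbound hDpos.le |>.trans_eq rfl
      _ = (R:ℝ) * (K * Y ^ R) / (|(B.det : ℝ)| * pr * P ^ d) := by
          rw [div_div]; congr 1; ring
      _ ≤ Q / (|(B.det : ℝ)| * pr * P ^ d) := by
          apply div_le_div_of_nonneg_right hRKQ
          exact (mul_pos (mul_pos hDpos hprpos) hPd).le
end

section
/- Let Δ < 1/(d−1) be a fixed positive real, q a positive integer, t a positive integer, and w_t(z) = ((z+t)^d − z^d)/t. For X ≥ 2, the count Σ_{s | q, s ≤ d X^{d−1}} s^Δ · #{1 ≤ z ≤ X : gcd(z,t)=1, s | w_t(z)} is O(X q^ε), where the implied constant depends on d, Δ, ε. -/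
open Finset Polynomial

namespace DCC

open scoped Classical

noncomputable section

/-- `V d z w = ∑_{i<d} (z+w)^i z^{d-1-i}`, so that `(z+w)^d - z^d = V * w`. -/
def V (d : ℕ) (z w : ℤ) : ℤ := ∑ i ∈ Finset.range d, (z + w) ^ i * z ^ (d - 1 - i)

def fpol (d : ℕ) : ℤ[X] := (X + 1) ^ d - X ^ d

def gpol (d : ℕ) : ℤ[X] := ∑ i ∈ Finset.range d, (X + 1) ^ i

def rho (d s t : ℕ) : ℕ :=
  ((Finset.range s).filter (fun r : ℕ =>
    Nat.Coprime r (Nat.gcd s t) ∧ (s : ℤ) ∣ V d r t)).card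

def K (d : ℕ) : ℕ :=
  d + d * (((gpol d).natDegree + 1) * d ^ 3) + ((fpol d).natDegree + 1) * d ^ 6

variable {d : ℕ}

lemma V_mul (z t : ℤ) : V d z t * t = (z + t) ^ d - z ^ d := by
  have := geom_sum₂_mul (z + t) z d
  simpa [V] using this

lemma div_eq (z t : ℕ) (ht : 0 < t) :
    (((z + t : ℕ) : ℤ) ^ d - (z : ℤ) ^ d) / (t : ℤ) = V d z t := by
  have h : ((z + t : ℕ) : ℤ) ^ d - (z : ℤ) ^ d = (t : ℤ) * V d z t := by
    push_cast
    rw [mul_comm, V_mul]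
  rw [h, Int.mul_ediv_cancel_left]
  exact_mod_cast ht.ne'

lemma V_sub1 (u t : ℤ) : V d (t * u) t = t ^ (d - 1) * V d u 1 := by
  unfold V
  rw [Finset.mul_sum]
  refine Finset.sum_congr rfl fun i hi => ?_
  have hi' : i ≤ d - 1 := Nat.le_sub_one_of_lt (Finset.mem_range.mp hi)
  have : t * u + t = t * (u + 1) := by ring
  rw [this]
  have h2 : (t * (u + 1)) ^ i * (t * u) ^ (d - 1 - i)
      = (t ^ i * t ^ (d - 1 - i)) * ((u + 1) ^ i * u ^ (d - 1 - i)) := by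
    rw [mul_pow, mul_pow]; ring
  rw [h2, ← pow_add]
  congr 2
  omega

lemma V_eq_fpol (u : ℤ) : V d u 1 = (fpol d).eval u := by
  have h := V_mul (d := d) u 1
  simp only [mul_one] at h
  simp [fpol, h]

lemma gpol_eval (u : ℤ) : (gpol d).eval u = ∑ i ∈ Finset.range d, (u + 1) ^ i := by
  simp [gpol, eval_finset_sum]

lemma bezout_g {d : ℕ} (hd : 1 ≤ d) :
    ∃ A B : ℤ[X], A * gpol d + B * derivative (gpol d) = C ((d : ℤ)) := by
  have hXg : gpol d * X = (X + 1) ^ d - 1 := by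
    have := geom_sum_mul (X + 1 : ℤ[X]) d
    simpa [gpol] using this
  have hEq : derivative (gpol d) * X + gpol d = (d : ℤ[X]) * (X + 1) ^ (d - 1) := by
    have := congrArg derivative hXg
    simpa [derivative_mul, derivative_pow] using this
  refine ⟨1 + X - (d : ℤ[X]) * X, X + X ^ 2, ?_⟩
  have hC : C ((d : ℤ)) = (d : ℤ[X]) := by simp
  rw [hC]
  have hpow : (X + 1 : ℤ[X]) ^ d = (X + 1) ^ (d - 1) * (X + 1) := by
    conv_lhs => rw [show d = (d - 1) + 1 by omega]
    rw [pow_succ]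
  linear_combination (-(d : ℤ[X])) * hXg + (1 + X) * hEq + (-(d : ℤ[X])) * hpow

lemma bezout_f {d : ℕ} (hd : 2 ≤ d) :
    ∃ A B : ℤ[X], A * fpol d + B * derivative (fpol d) = C ((d : ℤ) ^ 2) := by
  obtain ⟨n, rfl⟩ : ∃ n, d = n + 2 := ⟨d - 2, by omega⟩
  have hcop : IsCoprime (X + 1 : ℤ[X]) X := ⟨1, -1, by ring⟩
  obtain ⟨P, Q, hPQ⟩ := (hcop.pow (n := n + 1) (m := n + 1))
  have hf' : derivative (fpol (n + 2))
      = (↑(n + 2) : ℤ[X]) * (X + 1) ^ (n + 1) - (↑(n + 2) : ℤ[X]) * X ^ (n + 1) := by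
    simp [fpol, derivative_pow]
  have hC : C ((↑(n + 2) : ℤ) ^ 2) = ((↑(n + 2) : ℤ[X])) ^ 2 := by
    rw [← C_eq_natCast, ← C_pow]
  refine ⟨(↑(n + 2) : ℤ[X]) ^ 2 * (P + Q),
    -((↑(n + 2) : ℤ[X])) * (P * X + Q * (X + 1)), ?_⟩
  have hfe : fpol (n + 2) = (X + 1) ^ (n + 2) - X ^ (n + 2) := rfl
  rw [hC, hf', hfe]
  linear_combination ((↑(n + 2) : ℤ[X]) ^ 2) * hPQ

lemma coprime_mod {r m n : ℕ} (h : Nat.Coprime r m) (hmn : m ∣ n) :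
    Nat.Coprime (r % n) m := by
  obtain ⟨c, rfl⟩ := hmn
  have key : r % (m * c) + m * (c * (r / (m * c))) = r := by
    rw [← mul_assoc, Nat.mod_add_div]
  have h2 : Nat.Coprime (r % (m * c) + m * (c * (r / (m * c)))) m := by rwa [key]
  rwa [mul_comm m (c * (r / (m * c))), Nat.coprime_add_mul_right_left] at h2

lemma dvd_V_nat_iff (s z t : ℕ) :
    ((s : ℤ) ∣ V d z t) ↔
      (∑ i ∈ Finset.range d, ((z : ZMod s) + (t : ZMod s)) ^ i * (z : ZMod s) ^ (d - 1 - i)) = 0 := by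
  have hcast : ((V d z t : ℤ) : ZMod s)
      = ∑ i ∈ Finset.range d, ((z : ZMod s) + (t : ZMod s)) ^ i * (z : ZMod s) ^ (d - 1 - i) := by
    push_cast [V]
    norm_cast
  rw [← ZMod.intCast_zmod_eq_zero_iff_dvd, hcast]

lemma dvd_V_mod (s z t : ℕ) (h : (s : ℤ) ∣ V d z t) :
    (s : ℤ) ∣ V d ((z % s : ℕ) : ℤ) t := by
  rw [dvd_V_nat_iff] at h ⊢
  rwa [ZMod.natCast_mod]

lemma count_le {s t : ℕ} (hs : 0 < s) (M : ℕ) :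
    (((Finset.Icc 1 M)).filter (fun z : ℕ =>
      Nat.gcd z t = 1 ∧ (s : ℤ) ∣ V d z t)).card ≤ rho d s t * (M / s + 1) := by
  classical
  rw [rho, ← Finset.card_range (M / s + 1), ← Finset.card_product]
  apply Finset.card_le_card_of_injOn (fun z => (z % s, z / s))
  · intro z hz
    simp only [Finset.mem_coe, Finset.mem_filter, Finset.mem_Icc] at hz
    obtain ⟨⟨hz1, hzM⟩, hcop, hdvd⟩ := hz
    simp only [Finset.mem_coe, Finset.mem_product, Finset.mem_filter, Finset.mem_range]
    refine ⟨⟨Nat.mod_lt _ hs, ?_, dvd_V_mod s z t hdvd⟩, ?_⟩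
    · exact coprime_mod (Nat.Coprime.coprime_dvd_right (Nat.gcd_dvd_right s t) hcop)
        (Nat.gcd_dvd_left s t)
    · exact Nat.lt_succ_of_le (Nat.div_le_div_right hzM)
  · intro z1 _ z2 _ hz
    simp only [Prod.mk.injEq] at hz
    obtain ⟨h1, h2⟩ := hz
    rw [← Nat.div_add_mod z1 s, ← Nat.div_add_mod z2 s, h1, h2]

lemma rho_mul (a b t : ℕ) (hab : Nat.Coprime a b) :
    rho d (a * b) t ≤ rho d a t * rho d b t := by
  rcases Nat.eq_zero_or_pos a with rfl | ha
  · simp [rho]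
  rcases Nat.eq_zero_or_pos b with rfl | hb
  · simp [rho]
  rw [rho, rho, rho, ← Finset.card_product]
  apply Finset.card_le_card_of_injOn (fun r => (r % a, r % b))
  · intro r hr
    simp only [Finset.mem_coe, Finset.mem_filter, Finset.mem_range] at hr
    obtain ⟨hrlt, hcop, hdvd⟩ := hr
    have hdc : ∀ c c' : ℕ, c ∣ c' → Nat.gcd c t ∣ Nat.gcd c' t := fun c c' h =>
      Nat.dvd_gcd (dvd_trans (Nat.gcd_dvd_left c t) h) (Nat.gcd_dvd_right c t)
    simp only [Finset.mem_coe, Finset.mem_product, Finset.mem_filter, Finset.mem_range]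
    constructor
    · refine ⟨Nat.mod_lt _ ha, ?_, ?_⟩
      · exact coprime_mod (hcop.coprime_dvd_right (hdc a (a*b) ⟨b, rfl⟩)) (Nat.gcd_dvd_left a t)
      · exact dvd_V_mod a r t (dvd_trans (by exact_mod_cast Int.natCast_dvd_natCast.mpr ⟨b, rfl⟩) hdvd)
    · refine ⟨Nat.mod_lt _ hb, ?_, ?_⟩
      · exact coprime_mod (hcop.coprime_dvd_right (hdc b (a*b) ⟨a, mul_comm a b⟩)) (Nat.gcd_dvd_left b t)
      · exact dvd_V_mod b r t (dvd_trans (by exact_mod_cast Int.natCast_dvd_natCast.mpr ⟨a, mul_comm a b⟩) hdvd)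
  · intro r1 hr1 r2 hr2 hr
    simp only [Finset.coe_filter, Set.mem_setOf_eq, Finset.mem_range] at hr1 hr2
    simp only [Prod.mk.injEq] at hr
    have h1 : r1 ≡ r2 [MOD a] := by
      unfold Nat.ModEq; rw [hr.1]
    have h2 : r1 ≡ r2 [MOD b] := by
      unfold Nat.ModEq; rw [hr.2]
    have := (Nat.modEq_and_modEq_iff_modEq_mul hab).mp ⟨h1, h2⟩
    calc r1 = r1 % (a * b) := (Nat.mod_eq_of_lt hr1.1).symm
    _ = r2 % (a * b) := this
    _ = r2 := Nat.mod_eq_of_lt hr2.1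

lemma rho_le_card (s t : ℕ) : rho d s t ≤ s := by
  simpa [rho] using (Finset.card_filter_le (Finset.range s) _)

lemma cluster (f A B : ℤ[X]) (e : ℤ) (hb : A * f + B * derivative f = C e)
    (p k v : ℕ) (hp : p.Prime) (hv : ¬ ((p : ℤ)) ^ (v + 1) ∣ e) (hkv : v + 1 ≤ k)
    (x y : ℤ) (hx : (p : ℤ) ^ k ∣ f.eval x) (hy : (p : ℤ) ^ k ∣ f.eval y)
    (hcong : (p : ℤ) ^ (v + 1) ∣ x - y) : (p : ℤ) ^ (k - v) ∣ x - y := by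
  by_cases hw0 : x - y = 0
  · rw [hw0]; exact dvd_zero _
  set w : ℤ := x - y with hw
  have hbez : A.eval y * f.eval y + B.eval y * (derivative f).eval y = e := by
    have := congrArg (Polynomial.eval y) hb
    simpa using this
  have hfy' : ¬ (p : ℤ) ^ (v + 1) ∣ (derivative f).eval y := by
    intro hdvd
    apply hv
    have h1 : (p : ℤ) ^ (v + 1) ∣ f.eval y := dvd_trans (pow_dvd_pow _ hkv) hy
    rw [← hbez]
    exact dvd_add (Dvd.dvd.mul_left h1 _) (Dvd.dvd.mul_left hdvd _)
  obtain ⟨c, hc⟩ := f.binomExpansion y w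
  rw [show y + w = x by rw [hw]; ring] at hc
  set S : ℤ := (derivative f).eval y + c * w with hS
  have hWS : (p : ℤ) ^ k ∣ w * S := by
    have heq : w * S = f.eval x - f.eval y := by rw [hc, hS]; ring
    rw [heq]
    exact dvd_sub hx hy
  have hwna : w.natAbs ≠ 0 := Int.natAbs_ne_zero.mpr hw0
  set j := w.natAbs.factorization p with hj
  have hpj : (p : ℕ) ^ j ∣ w.natAbs := Nat.ordProj_dvd _ _
  have hvj : v + 1 ≤ j := by
    apply (Nat.Prime.pow_dvd_iff_le_factorization hp hwna).mp
    rw [← Int.natAbs_dvd_natAbs] at hcong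
    simpa [Int.natAbs_pow, Int.natAbs_natCast] using hcong
  suffices hkj : k - v ≤ j by
    calc (p : ℤ) ^ (k - v) ∣ (p : ℤ) ^ j := pow_dvd_pow _ hkj
    _ ∣ w := by
        rw [← Int.natAbs_dvd_natAbs]
        simpa [Int.natAbs_pow, Int.natAbs_natCast] using hpj
  by_contra hjk
  push_neg at hjk
  -- so j + v < k
  have hjvk : j + 1 ≤ k - v := hjk
  set w1 : ℕ := w.natAbs / p ^ j with hw1
  have hw1eq : p ^ j * w1 = w.natAbs := Nat.ordProj_mul_ordCompl_eq_self _ _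
  have hpw1 : ¬ p ∣ w1 := Nat.not_dvd_ordCompl hp hwna
  have hnatdvd : p ^ k ∣ w.natAbs * S.natAbs := by
    have := (Int.natAbs_dvd_natAbs).mpr hWS
    simpa [Int.natAbs_mul, Int.natAbs_pow] using this
  have hcancel : p ^ (k - j) ∣ w1 * S.natAbs := by
    have hkeq : p ^ k = p ^ j * p ^ (k - j) := by
      rw [← pow_add]; congr 1; omega
    rw [hkeq, ← hw1eq, mul_assoc] at hnatdvd
    exact (mul_dvd_mul_iff_left (pow_ne_zero j hp.pos.ne')).mp hnatdvd
  have hcop : Nat.Coprime (p ^ (k - j)) w1 :=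
    Nat.Coprime.pow_left _ ((Nat.Prime.coprime_iff_not_dvd hp).mpr hpw1)
  have hSn : p ^ (k - j) ∣ S.natAbs := hcop.dvd_of_dvd_mul_left hcancel
  have hSdvd : (p : ℤ) ^ (v + 1) ∣ S := by
    have h1 : (p : ℤ) ^ (k - j) ∣ S := by
      rw [← Int.natAbs_dvd_natAbs]
      simpa [Int.natAbs_pow, Int.natAbs_natCast] using hSn
    exact dvd_trans (pow_dvd_pow _ (by omega)) h1
  apply hfy'
  have : (derivative f).eval y = S - c * w := by rw [hS]; ring
  rw [this]
  exact dvd_sub hSdvd (Dvd.dvd.mul_left hcong _)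

lemma rootBound (f A B : ℤ[X]) (e : ℤ) (he : e ≠ 0)
    (hb : A * f + B * derivative f = C e) (p k : ℕ) (hp : p.Prime) (hk : 1 ≤ k) :
    ((Finset.range (p ^ k)).filter (fun z : ℕ => ((p : ℤ)) ^ k ∣ f.eval (z : ℤ))).card ≤
      (f.natDegree + 1) * e.natAbs ^ 3 := by
  classical
  have hena : e.natAbs ≠ 0 := Int.natAbs_ne_zero.mpr he
  have hena1 : 1 ≤ e.natAbs := Nat.one_le_iff_ne_zero.mpr hena
  set v : ℕ := e.natAbs.factorization p with hvdef
  have hpv : p ^ v ≤ e.natAbs := Nat.le_of_dvd (Nat.pos_of_ne_zero hena) (Nat.ordProj_dvd _ _)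
  have hvnd : ¬ (p : ℤ) ^ (v + 1) ∣ e := by
    intro hdvd
    exact Nat.pow_succ_factorization_not_dvd hena hp
      (by rw [← Int.natAbs_dvd_natAbs] at hdvd
          simpa [Int.natAbs_pow, Int.natAbs_natCast] using hdvd)
  by_cases hkv : k ≤ v
  · calc _ ≤ (Finset.range (p ^ k)).card := Finset.card_filter_le _ _
    _ = p ^ k := Finset.card_range _
    _ ≤ p ^ v := Nat.pow_le_pow_right hp.pos hkv
    _ ≤ e.natAbs := hpv
    _ ≤ e.natAbs ^ 3 := Nat.le_self_pow (by norm_num) _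
    _ ≤ (f.natDegree + 1) * e.natAbs ^ 3 := Nat.le_mul_of_pos_left _ (by omega)
  push_neg at hkv
  have hkv' : v + 1 ≤ k := hkv
  set RP : Finset ℕ := (Finset.range p).filter (fun r : ℕ => (p : ℤ) ∣ f.eval (r : ℤ)) with hRP
  have hmain : ((Finset.range (p ^ k)).filter
      (fun z : ℕ => ((p : ℤ)) ^ k ∣ f.eval (z : ℤ))).card ≤ RP.card * (p ^ v * p ^ v) := by
    rw [← Finset.card_range (p ^ v), ← Finset.card_product, ← Finset.card_product]
    apply Finset.card_le_card_of_injOn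
      (fun z => (z % p, (z % p ^ (v + 1) / p, z / p ^ (k - v))))
    · intro z hz
      simp only [Finset.mem_coe, Finset.mem_filter, Finset.mem_range] at hz
      obtain ⟨hzlt, hdvd⟩ := hz
      simp only [hRP, Finset.mem_coe, Finset.mem_product, Finset.mem_filter, Finset.mem_range]
      refine ⟨⟨Nat.mod_lt _ hp.pos, ?_⟩, ?_, ?_⟩
      · have h1 : (p : ℤ) ∣ ((z : ℤ) - ((z % p : ℕ) : ℤ)) := by
          have := (Nat.modEq_iff_dvd (n := p) (a := z % p) (b := z)).mp (Nat.mod_modEq z p)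
          simpa using this
        have h2 : (p : ℤ) ∣ f.eval (z : ℤ) - f.eval ((z % p : ℕ) : ℤ) :=
          dvd_trans h1 (Polynomial.sub_dvd_eval_sub _ _ f)
        have h3 : (p : ℤ) ∣ f.eval (z : ℤ) :=
          dvd_trans (dvd_pow_self _ (by omega)) hdvd
        have := dvd_sub h3 h2
        simpa using this
      · apply Nat.div_lt_of_lt_mul
        calc z % p ^ (v+1) < p ^ (v+1) := Nat.mod_lt _ (pow_pos hp.pos _)
        _ = p * p ^ v := by rw [pow_succ]; ring
      · apply Nat.div_lt_of_lt_mul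
        calc z < p ^ k := hzlt
        _ = p ^ (k - v) * p ^ v := by rw [← pow_add]; congr 1; omega
    · intro z1 hz1 z2 hz2 heq
      simp only [Finset.coe_filter, Set.mem_setOf_eq, Finset.mem_range] at hz1 hz2
      simp only [Prod.mk.injEq] at heq
      obtain ⟨e1, e2, e3⟩ := heq
      have hm1 : z1 % p ^ (v + 1) = z2 % p ^ (v + 1) := by
        have a1 : z1 % p ^ (v + 1) % p = z2 % p ^ (v + 1) % p := by
          rw [Nat.mod_mod_of_dvd _ (dvd_pow_self p (by omega)),
            Nat.mod_mod_of_dvd _ (dvd_pow_self p (by omega)), e1]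
        calc z1 % p ^ (v + 1)
            = p * (z1 % p ^ (v + 1) / p) + z1 % p ^ (v + 1) % p := (Nat.div_add_mod _ p).symm
        _ = p * (z2 % p ^ (v + 1) / p) + z2 % p ^ (v + 1) % p := by rw [e2, a1]
        _ = z2 % p ^ (v + 1) := Nat.div_add_mod _ p
      have hcong : (p : ℤ) ^ (v + 1) ∣ (z1 : ℤ) - (z2 : ℤ) := by
        have h : z2 ≡ z1 [MOD p ^ (v + 1)] := by unfold Nat.ModEq; rw [hm1]
        have h2 := (Nat.modEq_iff_dvd).mp h
        push_cast at h2
        exact h2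
      have hclu := cluster f A B e hb p k v hp hvnd hkv' z1 z2 hz1.2 hz2.2 hcong
      have hm2 : z1 % p ^ (k - v) = z2 % p ^ (k - v) := by
        have h3 : z2 ≡ z1 [MOD p ^ (k - v)] := (Nat.modEq_iff_dvd).mpr (by push_cast; exact hclu)
        exact h3.symm
      calc z1 = p ^ (k - v) * (z1 / p ^ (k - v)) + z1 % p ^ (k - v) :=
            (Nat.div_add_mod _ _).symm
      _ = p ^ (k - v) * (z2 / p ^ (k - v)) + z2 % p ^ (k - v) := by rw [e3, hm2]
      _ = z2 := Nat.div_add_mod _ _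
  haveI : Fact p.Prime := ⟨hp⟩
  set φ : ℤ →+* ZMod p := Int.castRingHom (ZMod p) with hφ
  by_cases hfbar : f.map φ = 0
  · -- all coefficients divisible by p; then p ∣ e
    have hpe : p ∣ e.natAbs := by
      have hmap := congrArg (Polynomial.map φ) hb
      rw [Polynomial.map_add, Polynomial.map_mul, Polynomial.map_mul, hfbar, mul_zero,
        ← Polynomial.derivative_map, hfbar] at hmap
      simp only [derivative_zero, mul_zero, add_zero, Polynomial.map_C] at hmap
      have : (e : ZMod p) = 0 := by
        have h0 : C (φ e) = C (0 : ZMod p) := by rw [← hmap]; simp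
        have := Polynomial.C_injective h0
        simpa [hφ] using this
      have hdvd : (p : ℤ) ∣ e := (ZMod.intCast_zmod_eq_zero_iff_dvd e p).mp this
      rw [← Int.natAbs_dvd_natAbs] at hdvd
      simpa using hdvd
    have hv1 : 1 ≤ v := by
      apply (Nat.Prime.pow_dvd_iff_le_factorization hp hena).mp
      simpa using hpe
    have hple : p ≤ p ^ v := by
      calc p = p ^ 1 := (pow_one p).symm
      _ ≤ p ^ v := Nat.pow_le_pow_right hp.pos hv1
    calc _ ≤ RP.card * (p ^ v * p ^ v) := hmain
    _ ≤ p * (p ^ v * p ^ v) := by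
        apply Nat.mul_le_mul_right
        calc RP.card ≤ (Finset.range p).card := Finset.card_filter_le _ _
        _ = p := Finset.card_range p
    _ ≤ p ^ v * (p ^ v * p ^ v) := Nat.mul_le_mul_right _ hple
    _ = (p ^ v) ^ 3 := by ring
    _ ≤ e.natAbs ^ 3 := Nat.pow_le_pow_left hpv 3
    _ ≤ (f.natDegree + 1) * e.natAbs ^ 3 := Nat.le_mul_of_pos_left _ (by omega)
  · -- f mod p nonzero: at most natDegree roots mod p
    have hRPle : RP.card ≤ f.natDegree := by
      have hinj : RP.card ≤ (f.map φ).roots.toFinset.card := by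
        apply Finset.card_le_card_of_injOn (fun z : ℕ => ((z : ℕ) : ZMod p))
        · intro z hz
          simp only [hRP, Finset.mem_coe, Finset.mem_filter, Finset.mem_range] at hz
          simp only [Finset.mem_coe]
          rw [Multiset.mem_toFinset, Polynomial.mem_roots']
          refine ⟨hfbar, ?_⟩
          have hzz : ((z : ℕ) : ZMod p) = φ ((z : ℕ) : ℤ) := by simp [hφ]
          rw [Polynomial.IsRoot, hzz, Polynomial.eval_map, Polynomial.eval₂_at_apply]
          have : φ (f.eval (z : ℤ)) = ((f.eval (z : ℤ) : ℤ) : ZMod p) := rfl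
          rw [this, ZMod.intCast_zmod_eq_zero_iff_dvd]
          exact_mod_cast hz.2
        · intro z1 hz1 z2 hz2 heq
          simp only [hRP, Finset.coe_filter, Set.mem_setOf_eq, Finset.mem_range] at hz1 hz2
          have v1 : (↑z1 : ZMod p).val = z1 := ZMod.val_natCast_of_lt hz1.1
          have v2 : (↑z2 : ZMod p).val = z2 := ZMod.val_natCast_of_lt hz2.1
          have heq' : ((z1 : ℕ) : ZMod p) = ((z2 : ℕ) : ZMod p) := heq
          rw [← v1, ← v2, heq']
      calc RP.card ≤ (f.map φ).roots.toFinset.card := hinj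
      _ ≤ Multiset.card (f.map φ).roots := Multiset.toFinset_card_le _
      _ ≤ (f.map φ).natDegree := Polynomial.card_roots' _
      _ ≤ f.natDegree := Polynomial.natDegree_map_le
    calc _ ≤ RP.card * (p ^ v * p ^ v) := hmain
    _ ≤ f.natDegree * (e.natAbs * e.natAbs) := by
        apply Nat.mul_le_mul hRPle (Nat.mul_le_mul hpv hpv)
    _ ≤ (f.natDegree + 1) * e.natAbs ^ 3 := by
        have h1 : e.natAbs * e.natAbs ≤ e.natAbs ^ 3 := by
          calc e.natAbs * e.natAbs = e.natAbs ^ 2 := (sq e.natAbs).symm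
          _ ≤ e.natAbs ^ 3 := Nat.pow_le_pow_right (by omega) (by omega)
        calc f.natDegree * (e.natAbs * e.natAbs) ≤ f.natDegree * e.natAbs ^ 3 :=
              Nat.mul_le_mul_left _ h1
        _ ≤ (f.natDegree + 1) * e.natAbs ^ 3 := Nat.mul_le_mul_right _ (by omega)

lemma rho_prime_pow (hd : 2 ≤ d) {p t k : ℕ} (hp : p.Prime) (ht : 0 < t) (hk : 1 ≤ k) :
    rho d (p ^ k) t ≤ K d := by
  classical
  have hd0 : 0 < d := by omega
  set n : ℕ := p ^ k with hn
  have hn1 : 1 < n := by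
    calc 1 < p := hp.one_lt
    _ = p ^ 1 := (pow_one p).symm
    _ ≤ p ^ k := Nat.pow_le_pow_right hp.pos hk
  haveI : NeZero n := ⟨by omega⟩
  have hncast : ((n : ℕ) : ℤ) = (p : ℤ) ^ k := by rw [hn]; push_cast; ring
  by_cases hpt : p ∣ t
  · -- CASE p ∣ t : coprimality forces z to be a unit
    have hpgcd : p ∣ Nat.gcd n t :=
      Nat.dvd_gcd (by rw [hn]; exact dvd_pow_self p (by omega)) hpt
    have hz_unit : ∀ z : ℕ, Nat.Coprime z (Nat.gcd n t) → ¬ p ∣ z := by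
      intro z hzcop hpz
      have h1 : p ∣ Nat.gcd z (Nat.gcd n t) := Nat.dvd_gcd hpz hpgcd
      rw [hzcop] at h1
      exact hp.one_lt.ne' (Nat.dvd_one.mp h1)
    have hz_cop_n : ∀ z : ℕ, Nat.Coprime z (Nat.gcd n t) → Nat.Coprime z n := by
      intro z hzcop
      rw [hn]
      exact Nat.Coprime.pow_right _
        (Nat.coprime_comm.mp ((Nat.Prime.coprime_iff_not_dvd hp).mpr (hz_unit z hzcop)))
    by_cases hkm : n ∣ t
    · -- SUBCASE p^k ∣ t
      rw [rho]
      rcases Finset.eq_empty_or_nonempty ((Finset.range n).filter (fun r : ℕ =>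
          Nat.Coprime r (Nat.gcd n t) ∧ (n : ℤ) ∣ V d r t)) with hE | ⟨z, hz⟩
      · rw [hE]; simp
      · simp only [Finset.mem_filter, Finset.mem_range] at hz
        obtain ⟨hzlt, hzcop, hzdvd⟩ := hz
        have hVz := (dvd_V_nat_iff n z t).mp hzdvd
        have ht0 : (t : ZMod n) = 0 := (ZMod.natCast_eq_zero_iff t n).mpr hkm
        rw [ht0] at hVz
        simp only [add_zero] at hVz
        have hsum : ∑ i ∈ Finset.range d, (z : ZMod n) ^ i * (z : ZMod n) ^ (d - 1 - i)
            = (d : ZMod n) * (z : ZMod n) ^ (d - 1) := by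
          rw [Finset.sum_congr rfl (fun i hi => ?_)]
          · rw [Finset.sum_const, Finset.card_range, nsmul_eq_mul]
          · rw [← pow_add]
            congr 1
            have := Finset.mem_range.mp hi
            omega
        rw [hsum] at hVz
        have hu : IsUnit ((z : ZMod n) ^ (d - 1)) :=
          IsUnit.pow _ ((ZMod.isUnit_iff_coprime z n).mpr (hz_cop_n z hzcop))
        have hD0 : (d : ZMod n) = 0 := (IsUnit.mul_left_eq_zero hu).mp hVz
        have hnd : n ∣ d := (ZMod.natCast_eq_zero_iff d n).mp hD0
        calc _ ≤ (Finset.range n).card := Finset.card_filter_le _ _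
        _ = n := Finset.card_range n
        _ ≤ d := Nat.le_of_dvd (by omega) hnd
        _ ≤ K d := by rw [K]; omega
    · -- SUBCASE p ∣ t but p^k ∤ t
      set m : ℕ := t.factorization p with hm
      have hpm : p ^ m ∣ t := Nat.ordProj_dvd _ _
      have hm1 : 1 ≤ m := by
        apply (Nat.Prime.pow_dvd_iff_le_factorization hp ht.ne').mp
        simpa using hpt
      have hmk : m < k := by
        by_contra hc
        push_neg at hc
        exact hkm (dvd_trans (by rw [hn]; exact pow_dvd_pow p hc) hpm)
      set t' : ℕ := t / p ^ m with ht'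
      have ht'eq : p ^ m * t' = t := Nat.ordProj_mul_ordCompl_eq_self t p
      have hpt' : ¬ p ∣ t' := Nat.not_dvd_ordCompl hp ht.ne'
      haveI : NeZero (p ^ m) := ⟨(pow_pos hp.pos m).ne'⟩
      set gR : Finset ℕ := (Finset.range n).filter
        (fun u : ℕ => ((p : ℤ)) ^ k ∣ (gpol d).eval (u : ℤ)) with hgR
      have hgRcard : gR.card ≤ ((gpol d).natDegree + 1) * d ^ 3 := by
        obtain ⟨A, B, hb⟩ := bezout_g (d := d) (by omega)
        have h2 := rootBound (gpol d) A B (d : ℤ) (by exact_mod_cast hd0.ne') hb p k hp hk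
        rw [← hn] at h2
        simpa [Int.natAbs_natCast] using h2
      set ψ : ℕ → ℕ := fun z => (((z : ZMod n))⁻¹ * (t : ZMod n)).val with hψ
      have hmaps : ∀ z ∈ (Finset.range n).filter (fun r : ℕ =>
          Nat.Coprime r (Nat.gcd n t) ∧ (n : ℤ) ∣ V d r t), ψ z ∈ gR := by
        intro z hz
        simp only [Finset.mem_filter, Finset.mem_range] at hz
        obtain ⟨hzlt, hzcop, hzdvd⟩ := hz
        have hzu : IsUnit ((z : ZMod n)) :=
          (ZMod.isUnit_iff_coprime z n).mpr (hz_cop_n z hzcop)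
        have hzub : (z : ZMod n) * (((z : ZMod n))⁻¹ * (t : ZMod n)) = (t : ZMod n) := by
          rw [← mul_assoc, ZMod.mul_inv_of_unit _ hzu, one_mul]
        have hucast : ((ψ z : ℕ) : ZMod n) = ((z : ZMod n))⁻¹ * (t : ZMod n) :=
          ZMod.natCast_rightInverse _
        have hVz := (dvd_V_nat_iff n z t).mp hzdvd
        have hsum : ∑ i ∈ Finset.range d, ((z : ZMod n) + (t : ZMod n)) ^ i *
              (z : ZMod n) ^ (d - 1 - i)
            = (z : ZMod n) ^ (d - 1) *
              ∑ i ∈ Finset.range d, (1 + ((z : ZMod n))⁻¹ * (t : ZMod n)) ^ i := by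
          rw [Finset.mul_sum]
          refine Finset.sum_congr rfl (fun i hi => ?_)
          have hile : i ≤ d - 1 := by
            have := Finset.mem_range.mp hi; omega
          calc ((z : ZMod n) + (t : ZMod n)) ^ i * (z : ZMod n) ^ (d - 1 - i)
              = ((z : ZMod n) * (1 + ((z : ZMod n))⁻¹ * (t : ZMod n))) ^ i *
                (z : ZMod n) ^ (d - 1 - i) := by
                rw [mul_add, mul_one, hzub]
          _ = (z : ZMod n) ^ (d - 1) * (1 + ((z : ZMod n))⁻¹ * (t : ZMod n)) ^ i := by
                rw [mul_pow, show (z : ZMod n) ^ i * (1 + ((z : ZMod n))⁻¹ * (t : ZMod n)) ^ i *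
                    (z : ZMod n) ^ (d - 1 - i)
                    = ((z : ZMod n) ^ i * (z : ZMod n) ^ (d - 1 - i)) *
                      (1 + ((z : ZMod n))⁻¹ * (t : ZMod n)) ^ i from by ring,
                  ← pow_add, show i + (d - 1 - i) = d - 1 from by omega]
        rw [hsum] at hVz
        have hgzero : ∑ i ∈ Finset.range d, (1 + ((z : ZMod n))⁻¹ * (t : ZMod n)) ^ i = 0 :=
          (IsUnit.mul_right_eq_zero (IsUnit.pow _ hzu)).mp hVz
        simp only [hgR, Finset.mem_filter, Finset.mem_range]
        refine ⟨ZMod.val_lt _, ?_⟩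
        rw [← hncast, ← ZMod.intCast_zmod_eq_zero_iff_dvd, gpol_eval]
        push_cast
        rw [hucast]
        simpa [add_comm] using hgzero
      have hfib : ∀ u ∈ gR, (((Finset.range n).filter (fun r : ℕ =>
          Nat.Coprime r (Nat.gcd n t) ∧ (n : ℤ) ∣ V d r t)).filter
            (fun z => ψ z = u)).card ≤ d := by
        intro u hu
        rcases Finset.eq_empty_or_nonempty (((Finset.range n).filter (fun r : ℕ =>
            Nat.Coprime r (Nat.gcd n t) ∧ (n : ℤ) ∣ V d r t)).filter
              (fun z => ψ z = u)) with hE | ⟨z0, hz0⟩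
        · rw [hE]; simp
        have hz0m := hz0
        simp only [Finset.mem_filter, Finset.mem_range] at hz0m
        obtain ⟨⟨hz0lt, hz0cop, hz0dvd⟩, hψ0⟩ := hz0m
        have hz0u : IsUnit ((z0 : ZMod n)) :=
          (ZMod.isUnit_iff_coprime z0 n).mpr (hz_cop_n z0 hz0cop)
        have hz0ub : (z0 : ZMod n) * (((z0 : ZMod n))⁻¹ * (t : ZMod n)) = (t : ZMod n) := by
          rw [← mul_assoc, ZMod.mul_inv_of_unit _ hz0u, one_mul]
        have hucast0 : ((u : ℕ) : ZMod n) = ((z0 : ZMod n))⁻¹ * (t : ZMod n) := by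
          rw [← hψ0]; exact ZMod.natCast_rightInverse _
        -- t ≡ z0 * u  [MOD n]
        have hmod : z0 * u ≡ t [MOD n] := by
          rw [← ZMod.natCast_eq_natCast_iff]
          push_cast
          rw [hucast0, hz0ub]
        -- p^m ∣ u
        have hpmu : p ^ m ∣ u := by
          have h1 : (n : ℤ) ∣ ((t : ℕ) : ℤ) - ((z0 * u : ℕ) : ℤ) := (Nat.modEq_iff_dvd).mp hmod
          have hpmn : ((p : ℤ)) ^ m ∣ (n : ℤ) := by rw [hncast]; exact pow_dvd_pow _ hmk.le
          have hpmt : ((p : ℤ)) ^ m ∣ ((t : ℕ) : ℤ) := by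
            rw [show ((p : ℤ)) ^ m = ((p ^ m : ℕ) : ℤ) from by push_cast; ring]
            exact_mod_cast hpm
          have h2 : ((p : ℤ)) ^ m ∣ ((z0 * u : ℕ) : ℤ) := by
            have heq2 : ((z0 * u : ℕ) : ℤ) = ((t : ℕ) : ℤ) - (((t : ℕ) : ℤ) - ((z0 * u : ℕ) : ℤ)) := by
              ring
            rw [heq2]
            exact dvd_sub hpmt (dvd_trans hpmn h1)
          have h3 : p ^ m ∣ z0 * u := by
            rw [show ((p : ℤ)) ^ m = ((p ^ m : ℕ) : ℤ) from by push_cast; ring] at h2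
            exact_mod_cast h2
          have hcpz : Nat.Coprime (p ^ m) z0 :=
            Nat.Coprime.pow_left _ ((Nat.Prime.coprime_iff_not_dvd hp).mpr (hz_unit z0 hz0cop))
          exact hcpz.dvd_of_dvd_mul_left h3
        -- p^m ∣ d
        have hpmd : p ^ m ∣ d := by
          have h1 : ((p : ℤ)) ^ m ∣ (gpol d).eval (u : ℤ) := by
            simp only [hgR, Finset.mem_filter, Finset.mem_range] at hu
            exact dvd_trans (pow_dvd_pow _ hmk.le) hu.2
          have h2 : ((u : ℕ) : ZMod (p ^ m)) = 0 :=
            (ZMod.natCast_eq_zero_iff u (p ^ m)).mpr hpmu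
          have h3 : (((gpol d).eval (u : ℤ) : ℤ) : ZMod (p ^ m)) = 0 := by
            rw [ZMod.intCast_zmod_eq_zero_iff_dvd]
            exact_mod_cast h1
          rw [gpol_eval] at h3
          push_cast at h3
          rw [h2] at h3
          simp only [add_zero, zero_add, one_pow] at h3
          rw [Finset.sum_const, Finset.card_range, nsmul_eq_mul, mul_one] at h3
          exact (ZMod.natCast_eq_zero_iff d (p ^ m)).mp h3
        have hpmdle : p ^ m ≤ d := Nat.le_of_dvd hd0 hpmd
        -- fiber injects into range (p^m) via z ↦ z / p^(k-m)
        calc _ ≤ (Finset.range (p ^ m)).card := by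
              apply Finset.card_le_card_of_injOn (fun z => z / p ^ (k - m))
              · intro z hz
                simp only [Finset.mem_coe, Finset.mem_filter, Finset.mem_range] at hz
                simp only [Finset.mem_coe, Finset.mem_range]
                apply Nat.div_lt_of_lt_mul
                calc z < n := hz.1.1
                _ = p ^ (k - m) * p ^ m := by rw [hn, ← pow_add]; congr 1; omega
              · intro z1 hz1 z2 hz2 heq
                simp only [Finset.coe_filter, Set.mem_setOf_eq, Finset.mem_filter,
                  Finset.mem_range] at hz1 hz2
                obtain ⟨⟨hz1lt, hz1cop, hz1dvd⟩, hψ1⟩ := hz1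
                obtain ⟨⟨hz2lt, hz2cop, hz2dvd⟩, hψ2⟩ := hz2
                have hz1u : IsUnit ((z1 : ZMod n)) :=
                  (ZMod.isUnit_iff_coprime z1 n).mpr (hz_cop_n z1 hz1cop)
                have hz2u : IsUnit ((z2 : ZMod n)) :=
                  (ZMod.isUnit_iff_coprime z2 n).mpr (hz_cop_n z2 hz2cop)
                have hcastu1 : ((u : ℕ) : ZMod n) = ((z1 : ZMod n))⁻¹ * (t : ZMod n) := by
                  rw [← hψ1]; exact ZMod.natCast_rightInverse _
                have hcastu2 : ((u : ℕ) : ZMod n) = ((z2 : ZMod n))⁻¹ * (t : ZMod n) := by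
                  rw [← hψ2]; exact ZMod.natCast_rightInverse _
                have e1 : (z1 : ZMod n) * ((u : ℕ) : ZMod n) = (t : ZMod n) := by
                  rw [hcastu1, ← mul_assoc, ZMod.mul_inv_of_unit _ hz1u, one_mul]
                have e2 : (z2 : ZMod n) * ((u : ℕ) : ZMod n) = (t : ZMod n) := by
                  rw [hcastu2, ← mul_assoc, ZMod.mul_inv_of_unit _ hz2u, one_mul]
                have hzz : ((z2 * t : ℕ) : ZMod n) = ((z1 * t : ℕ) : ZMod n) := by
                  push_cast
                  calc (z2 : ZMod n) * (t : ZMod n)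
                      = (z1 : ZMod n) * ((z2 : ZMod n) * ((u : ℕ) : ZMod n)) := by
                        rw [← e1]; ring
                  _ = (z1 : ZMod n) * (t : ZMod n) := by rw [e2]
                have hmod2 : z2 * t ≡ z1 * t [MOD n] := (ZMod.natCast_eq_natCast_iff _ _ _).mp hzz
                have hdint := (Nat.modEq_iff_dvd).mp hmod2
                have h5 : ((p : ℤ)) ^ k ∣ ((t : ℕ) : ℤ) * (((z1 : ℕ) : ℤ) - ((z2 : ℕ) : ℤ)) := by
                  rw [← hncast]
                  convert hdint using 1
                  push_cast
                  ring
                have hteq : ((t : ℕ) : ℤ) = ((p : ℤ)) ^ m * ((t' : ℕ) : ℤ) := by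
                  rw [show ((p : ℤ)) ^ m = ((p ^ m : ℕ) : ℤ) from by push_cast; ring]
                  exact_mod_cast ht'eq.symm
                rw [hteq] at h5
                have h6 : ((p : ℤ)) ^ (k - m) ∣ ((t' : ℕ) : ℤ) * (((z1 : ℕ) : ℤ) - ((z2 : ℕ) : ℤ)) := by
                  have hkeq : ((p : ℤ)) ^ k = ((p : ℤ)) ^ m * ((p : ℤ)) ^ (k - m) := by
                    rw [← pow_add]; congr 1; omega
                  rw [hkeq, mul_assoc] at h5
                  exact (mul_dvd_mul_iff_left (pow_ne_zero m
                    (by exact_mod_cast hp.pos.ne' : ((p : ℤ)) ≠ 0))).mp h5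
                have hcop' : IsCoprime (((p : ℤ)) ^ (k - m)) ((t' : ℕ) : ℤ) := by
                  rw [show ((p : ℤ)) ^ (k - m) = ((p ^ (k - m) : ℕ) : ℤ) from by push_cast; ring]
                  exact (Nat.isCoprime_iff_coprime).mpr
                    (Nat.Coprime.pow_left _ ((Nat.Prime.coprime_iff_not_dvd hp).mpr hpt'))
                have h7 : ((p : ℤ)) ^ (k - m) ∣ (((z1 : ℕ) : ℤ) - ((z2 : ℕ) : ℤ)) :=
                  hcop'.dvd_of_dvd_mul_left h6
                have hmod3 : z2 ≡ z1 [MOD p ^ (k - m)] := by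
                  apply (Nat.modEq_iff_dvd).mpr
                  rw [show ((p ^ (k - m) : ℕ) : ℤ) = ((p : ℤ)) ^ (k - m) from by push_cast; ring]
                  exact h7
                have hmm : z1 % p ^ (k - m) = z2 % p ^ (k - m) := hmod3.symm
                have heq' : z1 / p ^ (k - m) = z2 / p ^ (k - m) := heq
                calc z1 = p ^ (k - m) * (z1 / p ^ (k - m)) + z1 % p ^ (k - m) :=
                      (Nat.div_add_mod _ _).symm
                _ = p ^ (k - m) * (z2 / p ^ (k - m)) + z2 % p ^ (k - m) := by rw [heq', hmm]
                _ = z2 := Nat.div_add_mod _ _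
        _ = p ^ m := Finset.card_range _
        _ ≤ d := hpmdle
      calc rho d n t ≤ d * gR.card :=
            Finset.card_le_mul_card_image_of_maps_to hmaps d hfib
      _ ≤ d * (((gpol d).natDegree + 1) * d ^ 3) := Nat.mul_le_mul_left _ hgRcard
      _ ≤ K d := by rw [K]; omega
  · -- CASE p ∤ t : substitute and reduce to fpol
    have hcop_tn : Nat.Coprime t n := by
      rw [hn]
      exact Nat.Coprime.pow_right _
        (Nat.coprime_comm.mp ((Nat.Prime.coprime_iff_not_dvd hp).mpr hpt))
    obtain ⟨c, -, hc⟩ := Nat.exists_mul_mod_eq_one_of_coprime hcop_tn hn1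
    set fR : Finset ℕ := (Finset.range n).filter
      (fun u : ℕ => ((p : ℤ)) ^ k ∣ (fpol d).eval (u : ℤ)) with hfR
    have hfRcard : fR.card ≤ ((fpol d).natDegree + 1) * d ^ 6 := by
      obtain ⟨A, B, hb⟩ := bezout_f hd
      have h2 := rootBound (fpol d) A B ((d : ℤ) ^ 2)
        (pow_ne_zero _ (by exact_mod_cast hd0.ne')) hb p k hp hk
      rw [← hn] at h2
      have h3 : ((d : ℤ) ^ 2).natAbs ^ 3 = d ^ 6 := by
        rw [Int.natAbs_pow, Int.natAbs_natCast]
        ring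
      rw [h3] at h2
      exact h2
    have htc : (t : ZMod n) * (c : ZMod n) = 1 := by
      have h4 := congrArg (fun x : ℕ => (x : ZMod n)) hc
      rw [ZMod.natCast_mod] at h4
      push_cast at h4
      simpa using h4
    rw [rho]
    calc _ ≤ fR.card := by
          apply Finset.card_le_card_of_injOn (fun z => (c * z) % n)
          · intro z hz
            simp only [Finset.mem_coe, Finset.mem_filter, Finset.mem_range] at hz
            obtain ⟨hzlt, hzcop, hzdvd⟩ := hz
            simp only [hfR, Finset.mem_coe, Finset.mem_filter, Finset.mem_range]
            refine ⟨Nat.mod_lt _ (by omega), ?_⟩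
            have hVz := (dvd_V_nat_iff n z t).mp hzdvd
            have htu : ((t * ((c * z) % n) : ℕ) : ZMod n) = (z : ZMod n) := by
              push_cast [ZMod.natCast_mod]
              calc (t : ZMod n) * ((c : ZMod n) * (z : ZMod n))
                  = ((t : ZMod n) * (c : ZMod n)) * (z : ZMod n) := by ring
              _ = (z : ZMod n) := by rw [htc, one_mul]
            have hdvd2 : (n : ℤ) ∣ V d ((t * ((c * z) % n) : ℕ) : ℤ) t := by
              rw [dvd_V_nat_iff, htu]
              exact hVz
            have hid : V d ((t * ((c * z) % n) : ℕ) : ℤ) t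
                = ((t : ℕ) : ℤ) ^ (d - 1) * V d (((c * z) % n : ℕ) : ℤ) 1 := by
              push_cast
              exact V_sub1 _ _
            rw [hid] at hdvd2
            have hcop2 : IsCoprime ((n : ℕ) : ℤ) (((t : ℕ) : ℤ) ^ (d - 1)) :=
              IsCoprime.pow_right ((Nat.isCoprime_iff_coprime).mpr hcop_tn.symm)
            have hdvd3 : (n : ℤ) ∣ V d (((c * z) % n : ℕ) : ℤ) 1 :=
              hcop2.dvd_of_dvd_mul_left hdvd2
            rw [V_eq_fpol] at hdvd3
            rw [← hncast]
            exact hdvd3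
          · intro z1 hz1 z2 hz2 heq
            simp only [Finset.coe_filter, Set.mem_setOf_eq, Finset.mem_range] at hz1 hz2
            have heq' : (c * z1) % n = (c * z2) % n := heq
            have hcc : Nat.Coprime (t * c) n := by
              have h2 : t * c = n * (t * c / n) + 1 := by
                conv_lhs => rw [← Nat.div_add_mod (t * c) n]
                rw [hc]
              rw [h2, add_comm]
              exact (Nat.coprime_add_mul_left_left 1 n (t * c / n)).mpr (Nat.coprime_one_left n)
            have hcn : Nat.Coprime c n := Nat.Coprime.coprime_dvd_left ⟨t, mul_comm t c⟩ hcc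
            have hmod : z1 ≡ z2 [MOD n] := by
              apply Nat.ModEq.cancel_left_of_coprime
                (by simpa [Nat.coprime_comm] using hcn)
              exact heq'
            calc z1 = z1 % n := (Nat.mod_eq_of_lt hz1.1).symm
            _ = z2 % n := hmod
            _ = z2 := Nat.mod_eq_of_lt hz2.1
    _ ≤ ((fpol d).natDegree + 1) * d ^ 6 := hfRcard
    _ ≤ K d := by rw [K]; omega

lemma rho_le_K_pow (hd : 2 ≤ d) {t : ℕ} (ht : 0 < t) (s : ℕ) (hs : 0 < s) :
    rho d s t ≤ K d ^ s.primeFactors.card := by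
  induction s using Nat.recOnPosPrimePosCoprime with
  | prime_pow p n hp hn =>
      rw [Nat.primeFactors_prime_pow hn.ne' hp, Finset.card_singleton, pow_one]
      exact rho_prime_pow hd hp ht hn
  | zero => exact absurd hs (lt_irrefl 0)
  | one => simpa using rho_le_card 1 t
  | coprime a b ha hb hab iha ihb =>
      calc rho d (a * b) t ≤ rho d a t * rho d b t := rho_mul a b t hab
      _ ≤ K d ^ a.primeFactors.card * K d ^ b.primeFactors.card :=
          Nat.mul_le_mul (iha (by omega)) (ihb (by omega))
      _ = K d ^ (a.primeFactors.card + b.primeFactors.card) := (pow_add _ _ _).symm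
      _ = K d ^ (a * b).primeFactors.card := by
          rw [Nat.Coprime.primeFactors_mul hab, Finset.card_union_of_disjoint
            (Nat.Coprime.disjoint_primeFactors hab)]

lemma omega_bound (R : ℝ) (hR : 1 ≤ R) (ε : ℝ) (hε : 0 < ε) :
    ∃ C : ℝ, 1 ≤ C ∧ ∀ s : ℕ, 1 ≤ s → R ^ s.primeFactors.card ≤ C * (s : ℝ) ^ ε := by
  classical
  set M : ℕ := ⌈R ^ (1 / ε)⌉₊ with hM
  refine ⟨R ^ (M + 1), one_le_pow₀ hR, fun s hs => ?_⟩
  have hR0 : (0 : ℝ) ≤ R := le_trans zero_le_one hR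
  have hsplit : s.primeFactors = s.primeFactors.filter (· ≤ M) ∪
      s.primeFactors.filter (¬ · ≤ M) := (Finset.filter_union_filter_not_eq _ _).symm
  have hprod : R ^ s.primeFactors.card
      = (∏ _p ∈ s.primeFactors.filter (· ≤ M), R) *
        (∏ _p ∈ s.primeFactors.filter (¬ · ≤ M), R) := by
    rw [Finset.prod_const, Finset.prod_const, ← pow_add,
      Finset.card_filter_add_card_filter_not]
  rw [hprod]
  have h1 : (∏ _p ∈ s.primeFactors.filter (· ≤ M), R) ≤ R ^ (M + 1) := by
    rw [Finset.prod_const]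
    apply pow_le_pow_right₀ hR
    have : s.primeFactors.filter (· ≤ M) ⊆ Finset.range (M + 1) := by
      intro p hp
      simp only [Finset.mem_filter] at hp
      exact Finset.mem_range.mpr (Nat.lt_succ_of_le hp.2)
    simpa using Finset.card_le_card this
  have h2 : (∏ _p ∈ s.primeFactors.filter (¬ · ≤ M), R) ≤ (s : ℝ) ^ ε := by
    have step1 : (∏ _p ∈ s.primeFactors.filter (¬ · ≤ M), R)
        ≤ ∏ p ∈ s.primeFactors.filter (¬ · ≤ M), (p : ℝ) ^ ε := by
      apply Finset.prod_le_prod (fun _ _ => hR0)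
      intro p hp
      simp only [Finset.mem_filter, not_le] at hp
      have hMp : R ^ (1 / ε) ≤ (p : ℝ) := by
        calc R ^ (1 / ε) ≤ (M : ℝ) := Nat.le_ceil _
        _ ≤ (p : ℝ) := by exact_mod_cast hp.2.le
      calc R = (R ^ (1 / ε)) ^ ε := by
            rw [← Real.rpow_mul hR0, one_div_mul_cancel hε.ne', Real.rpow_one]
        _ ≤ (p : ℝ) ^ ε := Real.rpow_le_rpow (Real.rpow_nonneg hR0 _) hMp hε.le
    have step2 : ∏ p ∈ s.primeFactors.filter (¬ · ≤ M), (p : ℝ) ^ ε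
        = ((∏ p ∈ s.primeFactors.filter (¬ · ≤ M), p : ℕ) : ℝ) ^ ε := by
      rw [Real.finset_prod_rpow _ _ (fun i _ => by positivity) ε, ← Nat.cast_prod]
    have step3 : ((∏ p ∈ s.primeFactors.filter (¬ · ≤ M), p : ℕ) : ℝ) ^ ε ≤ (s : ℝ) ^ ε := by
      apply Real.rpow_le_rpow (by positivity) _ hε.le
      have hdvd : (∏ p ∈ s.primeFactors.filter (¬ · ≤ M), p) ∣ s := by
        refine dvd_trans ?_ (Nat.prod_primeFactors_dvd s)
        exact Finset.prod_dvd_prod_of_subset _ _ _ (Finset.filter_subset _ _)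
      exact_mod_cast Nat.le_of_dvd (by omega) hdvd
    calc _ ≤ _ := step1
    _ = _ := step2
    _ ≤ _ := step3
  calc _ ≤ R ^ (M+1) * ((s:ℝ) ^ ε) := by
        apply mul_le_mul h1 h2 (Finset.prod_nonneg fun _ _ => hR0)
          (by positivity)
  _ = _ := rfl

lemma tau_bound (ε : ℝ) (hε : 0 < ε) :
    ∃ C : ℝ, 1 ≤ C ∧ ∀ q : ℕ, 0 < q → (q.divisors.card : ℝ) ≤ C * (q : ℝ) ^ ε := by
  classical
  set ε1 : ℝ := ε / 2 with hε1
  have hε1pos : 0 < ε1 := by positivity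
  set Cr : ℝ := max 1 (1 / (ε1 * Real.log 2)) with hCr
  have hCr1 : 1 ≤ Cr := le_max_left _ _
  have hkey : ∀ (p a : ℕ), 2 ≤ p → ((a : ℝ) + 1) ≤ Cr * (p : ℝ) ^ ((a : ℝ) * ε1) := by
    intro p a hp
    have hlog2 : 0 < Real.log 2 := Real.log_pos (by norm_num)
    have h2p : (2 : ℝ) ^ ((a : ℝ) * ε1) ≤ (p : ℝ) ^ ((a : ℝ) * ε1) := by
      apply Real.rpow_le_rpow (by norm_num) (by exact_mod_cast hp) (by positivity)
    have hexp : (2 : ℝ) ^ ((a : ℝ) * ε1) = Real.exp ((a : ℝ) * ε1 * Real.log 2) := by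
      rw [Real.rpow_def_of_pos (by norm_num), mul_comm (Real.log 2)]
    have hlb : 1 + (a : ℝ) * ε1 * Real.log 2 ≤ (2 : ℝ) ^ ((a : ℝ) * ε1) := by
      rw [hexp]
      have := Real.add_one_le_exp ((a : ℝ) * ε1 * Real.log 2)
      linarith
    have hCrg : 1 ≤ Cr * (ε1 * Real.log 2) := by
      have h1 : 1 / (ε1 * Real.log 2) ≤ Cr := le_max_right _ _
      have hpos : 0 < ε1 * Real.log 2 := by positivity
      calc (1 : ℝ) = (1 / (ε1 * Real.log 2)) * (ε1 * Real.log 2) := by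
            field_simp
      _ ≤ Cr * (ε1 * Real.log 2) := by
            apply mul_le_mul_of_nonneg_right h1 hpos.le
    calc (a : ℝ) + 1 ≤ Cr * (1 + (a : ℝ) * ε1 * Real.log 2) := by
          have ha0 : (0:ℝ) ≤ (a:ℝ) := Nat.cast_nonneg a
          have := mul_le_mul_of_nonneg_left hCrg ha0
          nlinarith
    _ ≤ Cr * ((2 : ℝ) ^ ((a : ℝ) * ε1)) := by
          apply mul_le_mul_of_nonneg_left hlb (by linarith)
    _ ≤ Cr * (p : ℝ) ^ ((a : ℝ) * ε1) := by
          apply mul_le_mul_of_nonneg_left h2p (by linarith)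
  obtain ⟨C7, hC71, hC7⟩ := omega_bound Cr hCr1 ε1 hε1pos
  refine ⟨C7, hC71, fun q hq => ?_⟩
  have hq0 : q ≠ 0 := hq.ne'
  have htau : (q.divisors.card : ℝ) = ∏ p ∈ q.primeFactors, ((q.factorization p : ℝ) + 1) := by
    rw [Nat.card_divisors hq0]
    push_cast [Finset.prod_natCast]
    rfl
  have hstep : (q.divisors.card : ℝ)
      ≤ Cr ^ q.primeFactors.card * ∏ p ∈ q.primeFactors, (p : ℝ) ^ ((q.factorization p : ℝ) * ε1) := by
    rw [htau, ← Finset.prod_const, ← Finset.prod_mul_distrib]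
    apply Finset.prod_le_prod (fun _ _ => by positivity)
    intro p hp
    exact hkey p _ (Nat.Prime.two_le (Nat.prime_of_mem_primeFactors hp))
  have hprod : ∏ p ∈ q.primeFactors, (p : ℝ) ^ ((q.factorization p : ℝ) * ε1) = (q : ℝ) ^ ε1 := by
    have : ∀ p ∈ q.primeFactors, (p : ℝ) ^ ((q.factorization p : ℝ) * ε1)
        = ((p ^ (q.factorization p) : ℕ) : ℝ) ^ ε1 := by
      intro p hp
      rw [Real.rpow_mul (Nat.cast_nonneg p), Real.rpow_natCast]
      norm_cast
    rw [Finset.prod_congr rfl this, Real.finset_prod_rpow _ _ (fun i _ => by positivity) ε1,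
      ← Nat.cast_prod]
    congr 2
    exact_mod_cast Nat.factorization_prod_pow_eq_self hq0
  have homega := hC7 q hq
  have hq1 : (1:ℝ) ≤ (q:ℝ) := by exact_mod_cast hq
  calc (q.divisors.card : ℝ) ≤ Cr ^ q.primeFactors.card * (q : ℝ) ^ ε1 := by
        rw [← hprod]; exact hstep
  _ ≤ (C7 * (q : ℝ) ^ ε1) * (q : ℝ) ^ ε1 := by
        apply mul_le_mul_of_nonneg_right homega (by positivity)
  _ = C7 * (q : ℝ) ^ (ε1 + ε1) := by
        rw [Real.rpow_add (by linarith : (0:ℝ) < q)]; ring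
  _ = C7 * (q : ℝ) ^ ε := by
        congr 1
        rw [hε1]; ring_nf

end

end DCC
open Finset

/-- Divisor-weighted congruence count: let `0 < Δ < 1/(d−1)`, `w_t(z) = ((z+t)^d − z^d)/t`.
For `X ≥ 2`, `Σ_{s ∣ q, s ≤ dX^{d−1}} s^Δ · #{1 ≤ z ≤ X : gcd(z,t)=1, s ∣ w_t(z)}`
is `O(X q^ε)`, the constant depending only on `d, Δ, ε`. -/
theorem divisor_congruence_count_bound (d : ℕ) (hd : 2 ≤ d) (Δ : ℝ) (hΔ0 : 0 < Δ)
    (hΔ : Δ < 1 / ((d : ℝ) - 1)) (ε : ℝ) (hε : 0 < ε) :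
    ∃ C : ℝ, 0 < C ∧ ∀ (q t : ℕ), 0 < q → 0 < t → ∀ X : ℝ, 2 ≤ X →
      ∑ s ∈ q.divisors.filter (fun s : ℕ => (s : ℝ) ≤ d * X ^ (d - 1)),
        (s : ℝ) ^ Δ *
          ((Finset.Icc 1 ⌊X⌋₊).filter (fun z : ℕ =>
            Nat.gcd z t = 1 ∧ (s : ℤ) ∣ (((z + t : ℕ) : ℤ) ^ d - (z : ℤ) ^ d) / (t : ℤ))).card
        ≤ C * X * (q : ℝ) ^ ε := by
  classical
  have hd1 : (1 : ℝ) ≤ (d : ℝ) - 1 := by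
    have h2 : (2 : ℝ) ≤ (d : ℝ) := by exact_mod_cast hd
    linarith
  set ε' : ℝ := min ε (1 / ((d : ℝ) - 1) - Δ) with hε'def
  have hε'pos : 0 < ε' := lt_min hε (by linarith)
  have hε'ε : ε' ≤ ε := min_le_left _ _
  have hkey : ((d : ℝ) - 1) * (Δ + ε') ≤ 1 := by
    have h1 : Δ + ε' ≤ 1 / ((d : ℝ) - 1) := by
      have := min_le_right ε (1 / ((d : ℝ) - 1) - Δ)
      linarith
    calc ((d : ℝ) - 1) * (Δ + ε') ≤ ((d : ℝ) - 1) * (1 / ((d : ℝ) - 1)) :=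
          mul_le_mul_of_nonneg_left h1 (by linarith)
    _ = 1 := by field_simp
  have hΔε1 : Δ + ε' ≤ 1 := by nlinarith
  have hK1 : (1 : ℝ) ≤ (DCC.K d : ℝ) := by
    have h1 : d ≤ DCC.K d := by rw [DCC.K]; omega
    have h2 : 1 ≤ DCC.K d := by omega
    exact_mod_cast h2
  obtain ⟨C1, hC11, hC1⟩ := DCC.omega_bound (DCC.K d : ℝ) hK1 ε' hε'pos
  obtain ⟨C2, hC21, hC2⟩ := DCC.tau_bound ε hε
  refine ⟨C1 * (1 + (d : ℝ)) * C2, by positivity, ?_⟩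
  intro q t hq ht X hX
  have hXpos : (0 : ℝ) < X := by linarith
  have hX1 : (1 : ℝ) ≤ X := by linarith
  have hterm : ∀ s ∈ q.divisors.filter (fun s : ℕ => (s : ℝ) ≤ d * X ^ (d - 1)),
      (s : ℝ) ^ Δ *
          (((Finset.Icc 1 ⌊X⌋₊).filter (fun z : ℕ =>
            Nat.gcd z t = 1 ∧ (s : ℤ) ∣ (((z + t : ℕ) : ℤ) ^ d - (z : ℤ) ^ d) / (t : ℤ))).card : ℝ)
        ≤ C1 * (1 + (d : ℝ)) * X := by
    intro s hs
    simp only [Finset.mem_filter, Nat.mem_divisors] at hs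
    obtain ⟨⟨hsdvd, hq0⟩, hsle⟩ := hs
    have hs0 : 0 < s := Nat.pos_of_dvd_of_pos hsdvd hq
    have hsR1 : (1 : ℝ) ≤ (s : ℝ) := by exact_mod_cast hs0
    have hsle' : (s : ℝ) ≤ (d : ℝ) * X ^ (d - 1) := hsle
    have hseteq : (Finset.Icc 1 ⌊X⌋₊).filter (fun z : ℕ =>
          Nat.gcd z t = 1 ∧ (s : ℤ) ∣ (((z + t : ℕ) : ℤ) ^ d - (z : ℤ) ^ d) / (t : ℤ))
        = (Finset.Icc 1 ⌊X⌋₊).filter (fun z : ℕ =>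
          Nat.gcd z t = 1 ∧ (s : ℤ) ∣ DCC.V d (z : ℤ) (t : ℤ)) := by
      apply Finset.filter_congr
      intro z hz
      rw [DCC.div_eq z t ht]
    rw [hseteq]
    have hcount := DCC.count_le (d := d) (s := s) (t := t) hs0 ⌊X⌋₊
    have hrho : (DCC.rho d s t : ℝ) ≤ C1 * (s : ℝ) ^ ε' := by
      calc (DCC.rho d s t : ℝ) ≤ ((DCC.K d ^ s.primeFactors.card : ℕ) : ℝ) := by
            exact_mod_cast DCC.rho_le_K_pow hd ht s hs0
      _ = (DCC.K d : ℝ) ^ s.primeFactors.card := by push_cast; ring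
      _ ≤ C1 * (s : ℝ) ^ ε' := hC1 s hs0
    have hfl : (((⌊X⌋₊ / s + 1 : ℕ)) : ℝ) ≤ X / s + 1 := by
      push_cast
      have h1 : ((⌊X⌋₊ / s : ℕ) : ℝ) ≤ (⌊X⌋₊ : ℝ) / (s : ℝ) := Nat.cast_div_le
      have h2 : (⌊X⌋₊ : ℝ) ≤ X := Nat.floor_le (le_of_lt hXpos)
      have h3 : (⌊X⌋₊ : ℝ) / (s : ℝ) ≤ X / (s : ℝ) := by gcongr
      linarith
    have hNcast : ((((Finset.Icc 1 ⌊X⌋₊).filter (fun z : ℕ =>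
          Nat.gcd z t = 1 ∧ (s : ℤ) ∣ DCC.V d (z : ℤ) (t : ℤ))).card : ℕ) : ℝ)
        ≤ (DCC.rho d s t : ℝ) * (((⌊X⌋₊ / s + 1 : ℕ)) : ℝ) := by
      exact_mod_cast hcount
    have hprod : ((((Finset.Icc 1 ⌊X⌋₊).filter (fun z : ℕ =>
          Nat.gcd z t = 1 ∧ (s : ℤ) ∣ DCC.V d (z : ℤ) (t : ℤ))).card : ℕ) : ℝ)
        ≤ (C1 * (s : ℝ) ^ ε') * (X / s + 1) := by
      calc _ ≤ (DCC.rho d s t : ℝ) * (((⌊X⌋₊ / s + 1 : ℕ)) : ℝ) := hNcast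
      _ ≤ (C1 * (s : ℝ) ^ ε') * (X / s + 1) := by
          apply mul_le_mul hrho hfl (by positivity) (by positivity)
    have ha1 : (s : ℝ) ^ (Δ + ε') * (X / s) ≤ X := by
      have hsp : (s : ℝ) ^ (Δ + ε') ≤ (s : ℝ) := by
        calc (s : ℝ) ^ (Δ + ε') ≤ (s : ℝ) ^ (1 : ℝ) :=
              Real.rpow_le_rpow_of_exponent_le hsR1 hΔε1
        _ = (s : ℝ) := Real.rpow_one _
      calc (s : ℝ) ^ (Δ + ε') * (X / s) ≤ (s : ℝ) * (X / s) :=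
            mul_le_mul_of_nonneg_right hsp (by positivity)
      _ = X := by field_simp
    have ha2 : (s : ℝ) ^ (Δ + ε') ≤ (d : ℝ) * X := by
      have hd0R : (1 : ℝ) ≤ (d : ℝ) := by linarith
      have hb0 : (0 : ℝ) ≤ Δ + ε' := by linarith
      calc (s : ℝ) ^ (Δ + ε') ≤ ((d : ℝ) * X ^ (d - 1)) ^ (Δ + ε') :=
            Real.rpow_le_rpow (by positivity) hsle' hb0
      _ = (d : ℝ) ^ (Δ + ε') * (X ^ (d - 1) : ℝ) ^ (Δ + ε') :=
            Real.mul_rpow (by positivity) (by positivity)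
      _ ≤ (d : ℝ) * X := by
          have b1 : (d : ℝ) ^ (Δ + ε') ≤ (d : ℝ) := by
            calc (d : ℝ) ^ (Δ + ε') ≤ (d : ℝ) ^ (1 : ℝ) :=
                  Real.rpow_le_rpow_of_exponent_le hd0R hΔε1
            _ = (d : ℝ) := Real.rpow_one _
          have b2 : ((X ^ (d - 1) : ℝ)) ^ (Δ + ε') ≤ X := by
            rw [← Real.rpow_natCast X (d - 1), ← Real.rpow_mul (le_of_lt hXpos)]
            have hcast : (((d - 1 : ℕ)) : ℝ) = (d : ℝ) - 1 := by
              have : (1 : ℕ) ≤ d := by omega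
              push_cast [Nat.cast_sub this]
              ring
            calc X ^ ((((d - 1 : ℕ)) : ℝ) * (Δ + ε')) ≤ X ^ (1 : ℝ) := by
                  apply Real.rpow_le_rpow_of_exponent_le hX1
                  rw [hcast]
                  exact hkey
            _ = X := Real.rpow_one X
          calc (d : ℝ) ^ (Δ + ε') * (X ^ (d - 1) : ℝ) ^ (Δ + ε')
              ≤ (d : ℝ) * (X ^ (d - 1) : ℝ) ^ (Δ + ε') :=
                mul_le_mul_of_nonneg_right b1 (by positivity)
          _ ≤ (d : ℝ) * X := mul_le_mul_of_nonneg_left b2 (by positivity)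
    calc (s : ℝ) ^ Δ * (((Finset.Icc 1 ⌊X⌋₊).filter (fun z : ℕ =>
            Nat.gcd z t = 1 ∧ (s : ℤ) ∣ DCC.V d (z : ℤ) (t : ℤ))).card : ℝ)
        ≤ (s : ℝ) ^ Δ * ((C1 * (s : ℝ) ^ ε') * (X / s + 1)) :=
          mul_le_mul_of_nonneg_left hprod (Real.rpow_nonneg (by positivity) _)
    _ = C1 * ((s : ℝ) ^ (Δ + ε') * (X / s) + (s : ℝ) ^ (Δ + ε')) := by
          rw [Real.rpow_add (by linarith : (0 : ℝ) < (s : ℝ))]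
          ring
    _ ≤ C1 * (X + (d : ℝ) * X) := by
          apply mul_le_mul_of_nonneg_left _ (by linarith)
          linarith
    _ = C1 * (1 + (d : ℝ)) * X := by ring
  have hsum := Finset.sum_le_card_nsmul _ _ _ hterm
  have hcard : ((q.divisors.filter (fun s : ℕ => (s : ℝ) ≤ d * X ^ (d - 1))).card : ℝ)
      ≤ (q.divisors.card : ℝ) := by
    exact_mod_cast Finset.card_filter_le _ _
  have hpos0 : (0 : ℝ) ≤ C1 * (1 + (d : ℝ)) * X :=
    mul_nonneg (mul_nonneg (by linarith) (by positivity)) (le_of_lt hXpos)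
  calc _ ≤ ((q.divisors.filter (fun s : ℕ => (s : ℝ) ≤ d * X ^ (d - 1))).card : ℕ) •
        (C1 * (1 + (d : ℝ)) * X) := hsum
  _ = ((q.divisors.filter (fun s : ℕ => (s : ℝ) ≤ d * X ^ (d - 1))).card : ℝ) *
        (C1 * (1 + (d : ℝ)) * X) := nsmul_eq_mul _ _
  _ ≤ (q.divisors.card : ℝ) * (C1 * (1 + (d : ℝ)) * X) :=
        mul_le_mul_of_nonneg_right hcard hpos0
  _ ≤ (C2 * (q : ℝ) ^ ε) * (C1 * (1 + (d : ℝ)) * X) :=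
        mul_le_mul_of_nonneg_right (hC2 q hq) hpos0
  _ = C1 * (1 + (d : ℝ)) * C2 * X * (q : ℝ) ^ ε := by ring
end
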